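/- arXiv:0806.2023 — 4 statements merged into one kernel-verified Lean document; each statement's English description precedes it below -/
import Mathlib

section
/- Let r ≥ 1 and let G be an r-graph whose number of edges equals C(x,r) for some real number x ≥ r. Then the number of copies of the complete r-graph on r+1 vertices in G satisfies K^r_{r+1}(G) ≤ C(x,r+1). Moreover, equality holds if and only if x is an integer and G is the complete r-graph on a set of x vertices. -/
/-- Generalized binomial coefficient `C(x, k) = x(x-1)⋯(x-k+1)/k!` for real `x`. -/
noncomputable def gchoose (x : ℝ) (k : ℕ) : ℝ :=
  (∏ i ∈ Finset.range k, (x - i)) / (Nat.factorial k)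

/-- `cliqueCount r G m` is the number of `m`-element vertex subsets all of whose
`r`-element subsets are edges of `G` (i.e. the number of copies of `K^r_m` in `G`). -/
def cliqueCount {V : Type*} [Fintype V] [DecidableEq V]
    (r : ℕ) (G : Finset (Finset V)) (m : ℕ) : ℕ :=
  ((Finset.powersetCard m (Finset.univ : Finset V)).filter
    (fun T => ∀ S ∈ Finset.powersetCard r T, S ∈ G)).card


open Finset

set_option linter.unusedSectionVars false

lemma gchoose_succ (x : ℝ) (k : ℕ) :
    gchoose x (k + 1) = gchoose x k * (x - k) / (k + 1) := by
  unfold gchoose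
  rw [Finset.prod_range_succ, Nat.factorial_succ]
  have h1 : (Nat.factorial k : ℝ) ≠ 0 := by
    exact_mod_cast (Nat.factorial_pos k).ne'
  have h2 : ((k : ℝ) + 1) ≠ 0 := by positivity
  push_cast
  rw [div_mul_eq_mul_div, div_div, mul_comm ((k:ℝ) + 1)]

lemma gchoose_nonneg {x : ℝ} {k : ℕ} (h : (k : ℝ) - 1 ≤ x) : 0 ≤ gchoose x k := by
  apply div_nonneg _ (by positivity)
  apply Finset.prod_nonneg
  intro i hi
  simp only [Finset.mem_range] at hi
  have : (i : ℝ) + 1 ≤ k := by exact_mod_cast hi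
  linarith

lemma gchoose_mono {a b : ℝ} {k : ℕ} (h1 : (k : ℝ) - 1 ≤ a) (h2 : a ≤ b) :
    gchoose a k ≤ gchoose b k := by
  unfold gchoose
  have hf : (0:ℝ) < (Nat.factorial k : ℝ) := by exact_mod_cast Nat.factorial_pos k
  rw [div_le_div_iff_of_pos_right hf]
  apply Finset.prod_le_prod
  · intro i hi
    simp only [Finset.mem_range] at hi
    have : (i : ℝ) + 1 ≤ k := by exact_mod_cast hi
    linarith
  · intro i _; linarith

lemma gchoose_lt {a b : ℝ} {k : ℕ} (hk : 1 ≤ k) (h1 : (k : ℝ) - 1 ≤ a) (h2 : a < b) :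
    gchoose a k < gchoose b k := by
  unfold gchoose
  have hf : (0:ℝ) < (Nat.factorial k : ℝ) := by exact_mod_cast Nat.factorial_pos k
  rw [div_lt_div_iff_of_pos_right hf]
  rcases eq_or_lt_of_le h1 with heq | hlt
  · have hmem : k - 1 ∈ Finset.range k := by
      simp only [Finset.mem_range]; omega
    rw [Finset.prod_eq_zero hmem (by
      rw [← heq]
      have : ((k - 1 : ℕ) : ℝ) = (k : ℝ) - 1 := by
        have : (1:ℕ) ≤ k := hk
        push_cast [Nat.cast_sub this]
        ring
      rw [this]; ring)]
    apply Finset.prod_pos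
    intro i hi
    simp only [Finset.mem_range] at hi
    have : (i : ℝ) + 1 ≤ k := by exact_mod_cast hi
    linarith
  · apply Finset.prod_lt_prod_of_nonempty
    · intro i hi
      simp only [Finset.mem_range] at hi
      have : (i : ℝ) + 1 ≤ k := by exact_mod_cast hi
      linarith
    · intro i _; linarith
    · exact Finset.nonempty_range_iff.mpr (by omega)

lemma gchoose_pos {x : ℝ} {k : ℕ} (h : (k : ℝ) - 1 < x) : 0 < gchoose x k := by
  apply div_pos _ (by positivity)
  apply Finset.prod_pos
  intro i hi
  simp only [Finset.mem_range] at hi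
  have : (i : ℝ) + 1 ≤ k := by exact_mod_cast hi
  linarith

lemma gchoose_prod_nat (n k : ℕ) :
    ∏ i ∈ Finset.range k, ((n : ℝ) - i) = (n.descFactorial k : ℝ) := by
  induction k with
  | zero => simp
  | succ k ih =>
    rw [Finset.prod_range_succ, ih, Nat.descFactorial_succ]
    by_cases h : k ≤ n
    · push_cast [h]; ring
    · have h0 : n.descFactorial k = 0 := Nat.descFactorial_eq_zero_iff_lt.2 (by omega)
      rw [h0]; simp

lemma gchoose_nat (n k : ℕ) : gchoose (n : ℝ) k = (n.choose k : ℝ) := by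
  unfold gchoose
  rw [gchoose_prod_nat, Nat.descFactorial_eq_factorial_mul_choose]
  have h1 : (Nat.factorial k : ℝ) ≠ 0 := by exact_mod_cast (Nat.factorial_pos k).ne'
  push_cast
  field_simp

lemma gchoose_self (k : ℕ) : gchoose (k : ℝ) k = 1 := by
  rw [gchoose_nat, Nat.choose_self, Nat.cast_one]

lemma gchoose_pascal (x : ℝ) (k : ℕ) :
    gchoose (x + 1) (k + 1) = gchoose x (k + 1) + gchoose x k := by
  unfold gchoose
  have hnum : ∏ i ∈ Finset.range (k + 1), (x + 1 - i) =
      (∏ i ∈ Finset.range k, (x - i)) * (x + 1) := by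
    rw [Finset.prod_range_succ']
    have hcg : ∀ i ∈ Finset.range k, (x + 1 - ((i:ℕ) + 1 : ℕ)) = x - i := by
      intro i _; push_cast; ring
    rw [Finset.prod_congr rfl hcg]
    norm_num
  rw [hnum, Finset.prod_range_succ, Nat.factorial_succ]
  have h1 : (Nat.factorial k : ℝ) ≠ 0 := by exact_mod_cast (Nat.factorial_pos k).ne'
  have h2 : ((k : ℝ) + 1) ≠ 0 := by positivity
  push_cast
  field_simp
  ring

lemma gchoose_exists {k : ℕ} (hk : 1 ≤ k) {c : ℝ} (hc : 0 ≤ c) :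
    ∃ y : ℝ, (k : ℝ) - 1 ≤ y ∧ gchoose y k = c := by
  have hcont : Continuous fun y : ℝ => gchoose y k := by
    unfold gchoose
    exact (continuous_finset_prod _ fun i _ => (continuous_id.sub continuous_const)).div_const _
  set A : ℝ := (k : ℝ) - 1 with hA
  set B : ℝ := (k : ℝ) - 1 + max 1 (c * Nat.factorial k) with hB
  have hAB : A ≤ B := by
    have h : (0:ℝ) ≤ max 1 (c * Nat.factorial k) := le_trans zero_le_one (le_max_left _ _)
    rw [hA, hB]; linarith
  have hfA : gchoose A k = 0 := by
    have hmem : k - 1 ∈ Finset.range k := by simp only [Finset.mem_range]; omega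
    have hz : A - ((k - 1 : ℕ) : ℝ) = 0 := by
      have hcast : ((k - 1 : ℕ) : ℝ) = (k : ℝ) - 1 := by
        push_cast [Nat.cast_sub hk]; ring
      rw [hcast, hA]; ring
    have h0 : ∏ i ∈ Finset.range k, (A - (i:ℝ)) = 0 := Finset.prod_eq_zero hmem hz
    unfold gchoose
    rw [h0, zero_div]
  have hfB : c ≤ gchoose B k := by
    have hfac : (0:ℝ) < (Nat.factorial k : ℝ) := by exact_mod_cast Nat.factorial_pos k
    have hallone : ∀ i ∈ Finset.range k, (1:ℝ) ≤ B - i := by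
      intro i hi
      simp only [Finset.mem_range] at hi
      have h1 : (i : ℝ) + 1 ≤ k := by exact_mod_cast hi
      have h2 : (1:ℝ) ≤ max 1 (c * Nat.factorial k) := le_max_left _ _
      rw [hB]; linarith
    have hsingle : max 1 (c * Nat.factorial k) ≤ ∏ i ∈ Finset.range k, (B - i) := by
      have hmem : k - 1 ∈ Finset.range k := by simp only [Finset.mem_range]; omega
      have hval : B - ((k - 1 : ℕ) : ℝ) = max 1 (c * Nat.factorial k) := by
        have hcast : ((k - 1 : ℕ) : ℝ) = (k : ℝ) - 1 := by
          push_cast [Nat.cast_sub hk]; ring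
        rw [hcast, hB]; ring
      have h1le : (1:ℝ) ≤ ∏ i ∈ (Finset.range k).erase (k-1), (B - i) := by
        calc (1:ℝ) = ∏ _i ∈ (Finset.range k).erase (k-1), (1:ℝ) := by simp
          _ ≤ _ := Finset.prod_le_prod (by intros; norm_num)
              (fun i hi => hallone i (Finset.mem_of_mem_erase hi))
      have hsplit : ∏ i ∈ Finset.range k, (B - (i:ℝ)) =
          (B - ((k-1:ℕ):ℝ)) * ∏ i ∈ (Finset.range k).erase (k-1), (B - i) :=
        (Finset.mul_prod_erase _ _ hmem).symm
      have hnn : (0:ℝ) ≤ B - ((k-1:ℕ):ℝ) := by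
        rw [hval]; exact le_trans zero_le_one (le_max_left _ _)
      calc max 1 (c * Nat.factorial k) = (B - ((k-1:ℕ):ℝ)) * 1 := by rw [hval, mul_one]
        _ ≤ (B - ((k-1:ℕ):ℝ)) * ∏ i ∈ (Finset.range k).erase (k-1), (B - i) :=
            mul_le_mul_of_nonneg_left h1le hnn
        _ = ∏ i ∈ Finset.range k, (B - i) := hsplit.symm
    unfold gchoose
    rw [le_div_iff₀ hfac]
    calc c * (Nat.factorial k : ℝ) ≤ max 1 (c * Nat.factorial k) := le_max_right _ _
      _ ≤ _ := hsingle
  have := intermediate_value_Icc hAB hcont.continuousOn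
  have hmem : c ∈ Set.Icc (gchoose A k) (gchoose B k) := by
    rw [hfA]; exact ⟨hc, hfB⟩
  obtain ⟨y, hy, hyc⟩ := this hmem
  exact ⟨y, hy.1, hyc⟩

section Comb
variable {V : Type*} [Fintype V] [DecidableEq V]

/-- The set of `m`-cliques of the `r`-graph `G`. -/
def cliqueSet (r : ℕ) (G : Finset (Finset V)) (m : ℕ) : Finset (Finset V) :=
  ((Finset.powersetCard m (Finset.univ : Finset V)).filter
    (fun T => ∀ S ∈ Finset.powersetCard r T, S ∈ G))

lemma cliqueCount_eq (r : ℕ) (G : Finset (Finset V)) (m : ℕ) :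
    cliqueCount r G m = (cliqueSet r G m).card := rfl

lemma mem_cliqueSet {r m : ℕ} {G : Finset (Finset V)} {T : Finset V} :
    T ∈ cliqueSet r G m ↔ T.card = m ∧ ∀ S ⊆ T, S.card = r → S ∈ G := by
  simp only [cliqueSet, mem_filter, mem_powersetCard]
  constructor
  · rintro ⟨⟨-, h1⟩, h2⟩
    exact ⟨h1, fun S hS hScard => h2 S ⟨hS, hScard⟩⟩
  · rintro ⟨h1, h2⟩
    exact ⟨⟨Finset.subset_univ T, h1⟩, fun S hS => h2 S hS.1 hS.2⟩

/-- Degree of `u` in a family. -/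
def degree (G : Finset (Finset V)) (u : V) : ℕ := (G.filter (fun e => u ∈ e)).card

/-- Link of `u` in a family. -/
def link (G : Finset (Finset V)) (u : V) : Finset (Finset V) :=
  (G.filter (fun e => u ∈ e)).image (fun e => e.erase u)

lemma card_link (G : Finset (Finset V)) (u : V) : (link G u).card = degree G u := by
  apply Finset.card_image_of_injOn
  intro a ha b hb hab
  simp only [mem_coe, mem_filter] at ha hb
  have hab' : a.erase u = b.erase u := hab
  rw [← Finset.insert_erase ha.2, hab', Finset.insert_erase hb.2]

lemma mem_link {G : Finset (Finset V)} {u : V} {s : Finset V} :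
    s ∈ link G u ↔ u ∉ s ∧ insert u s ∈ G := by
  simp only [link, mem_image, mem_filter]
  constructor
  · rintro ⟨e, ⟨heG, hue⟩, rfl⟩
    exact ⟨Finset.notMem_erase u e, by rw [Finset.insert_erase hue]; exact heG⟩
  · rintro ⟨hus, hins⟩
    exact ⟨insert u s, ⟨hins, Finset.mem_insert_self u s⟩, Finset.erase_insert hus⟩

lemma link_sized {G : Finset (Finset V)} {r : ℕ} (hG : ∀ e ∈ G, e.card = r + 1) (u : V) :
    ∀ s ∈ link G u, s.card = r := by
  intro s hs
  rw [mem_link] at hs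
  have h1 : (insert u s).card = r + 1 := hG _ hs.2
  rw [Finset.card_insert_of_notMem hs.1] at h1
  omega

lemma sum_degree (F : Finset (Finset V)) (m : ℕ) (hF : ∀ e ∈ F, e.card = m) :
    ∑ u : V, degree F u = m * F.card := by
  unfold degree
  simp only [Finset.card_filter]
  rw [Finset.sum_comm]
  rw [Finset.sum_congr rfl (fun e he => ?_), Finset.sum_const, smul_eq_mul, mul_comm]
  have : ∑ u : V, ite (u ∈ e) 1 0 = (Finset.univ.filter (· ∈ e)).card := by
    rw [Finset.card_filter]
  rw [this, Finset.filter_univ_mem, hF e he]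

/-- Cliques of the graph of edges avoiding `u` are the cliques avoiding `u`. -/
lemma cliqueSet_avoid (r : ℕ) (hr : 1 ≤ r) (G : Finset (Finset V)) (u : V) :
    (cliqueSet r G (r + 1)).filter (fun T => ¬ u ∈ T)
      = cliqueSet r (G.filter (fun e => ¬ u ∈ e)) (r + 1) := by
  ext T
  simp only [mem_filter, mem_cliqueSet]
  constructor
  · rintro ⟨⟨hcard, hcl⟩, huT⟩
    exact ⟨hcard, fun S hST hScard => ⟨hcl S hST hScard, fun huS => huT (hST huS)⟩⟩
  · rintro ⟨hcard, hcl⟩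
    have huT : ¬ u ∈ T := by
      intro huT
      obtain ⟨S, hS1, hS2, hS3⟩ := Finset.exists_subsuperset_card_eq
        (Finset.singleton_subset_iff.2 huT) (by simpa using hr) (by omega : r ≤ T.card)
      exact (hcl S hS2 hS3).2 (hS1 (Finset.mem_singleton_self u))
    exact ⟨⟨hcard, fun S hST hSc => (hcl S hST hSc).1⟩, huT⟩

lemma clique_split (r : ℕ) (hr : 1 ≤ r) (G : Finset (Finset V)) (u : V) :
    cliqueCount r G (r + 1)
      = cliqueCount r (G.filter (fun e => ¬ u ∈ e)) (r + 1)
        + degree (cliqueSet r G (r + 1)) u := by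
  rw [cliqueCount_eq, cliqueCount_eq, ← cliqueSet_avoid r hr G u]
  unfold degree
  rw [← Finset.card_filter_add_card_filter_not (s := cliqueSet r G (r+1))
    (p := fun T => u ∈ T), add_comm]

lemma linkClique_subset_cliqueSet (r : ℕ) (G : Finset (Finset V)) (u : V) :
    link (cliqueSet (r + 1) G (r + 2)) u ⊆ cliqueSet r (link G u) (r + 1) := by
  intro s hs
  rw [mem_link] at hs
  obtain ⟨hus, hT⟩ := hs
  rw [mem_cliqueSet] at hT ⊢
  obtain ⟨hTcard, hTcl⟩ := hT
  have hscard : s.card = r + 1 := by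
    rw [Finset.card_insert_of_notMem hus] at hTcard; omega
  refine ⟨hscard, fun t hts htcard => ?_⟩
  rw [mem_link]
  have hut : u ∉ t := fun h => hus (hts h)
  refine ⟨hut, hTcl _ (Finset.insert_subset_insert u hts) ?_⟩
  rw [Finset.card_insert_of_notMem hut, htcard]

lemma linkClique_subset_avoid (r : ℕ) (G : Finset (Finset V)) (u : V) :
    link (cliqueSet r G (r + 1)) u ⊆ G.filter (fun e => ¬ u ∈ e) := by
  intro s hs
  rw [mem_link] at hs
  obtain ⟨hus, hT⟩ := hs
  rw [mem_cliqueSet] at hT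
  obtain ⟨hTcard, hTcl⟩ := hT
  have hscard : s.card = r := by
    rw [Finset.card_insert_of_notMem hus] at hTcard; omega
  exact mem_filter.2 ⟨hTcl s (Finset.subset_insert u s) hscard, hus⟩

lemma degree_cliqueSet_eq_zero (r : ℕ) (hr : 1 ≤ r) (G : Finset (Finset V)) (u : V)
    (h : degree G u = 0) : degree (cliqueSet r G (r + 1)) u = 0 := by
  unfold degree at h ⊢
  rw [Finset.card_eq_zero, Finset.filter_eq_empty_iff] at h ⊢
  intro T hT huT
  rw [mem_cliqueSet] at hT
  obtain ⟨hTcard, hTcl⟩ := hT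
  obtain ⟨S, hS1, hS2, hS3⟩ := Finset.exists_subsuperset_card_eq
    (Finset.singleton_subset_iff.2 huT) (by simpa using hr) (by omega : r ≤ T.card)
  exact h (hTcl S hS2 hS3) (hS1 (Finset.mem_singleton_self u))

lemma cliqueSet_powersetCard (r : ℕ) (hr : 1 ≤ r) (S : Finset V) :
    cliqueSet r (Finset.powersetCard r S) (r + 1) = Finset.powersetCard (r + 1) S := by
  ext T
  rw [mem_cliqueSet, Finset.mem_powersetCard]
  constructor
  · rintro ⟨hcard, hcl⟩
    refine ⟨fun t ht => ?_, hcard⟩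
    obtain ⟨P, hP1, hP2, hP3⟩ := Finset.exists_subsuperset_card_eq
      (Finset.singleton_subset_iff.2 ht) (by simp [hr]) (by omega : r ≤ T.card)
    have := hcl P hP2 hP3
    rw [Finset.mem_powersetCard] at this
    exact this.1 (hP1 (Finset.mem_singleton_self t))
  · rintro ⟨hTS, hcard⟩
    exact ⟨hcard, fun s hsT hscard =>
      Finset.mem_powersetCard.2 ⟨hsT.trans hTS, hscard⟩⟩

end Comb


lemma gchoose_one (x : ℝ) : gchoose x 1 = x := by
  unfold gchoose; simp

lemma cliqueCount_empty {V : Type*} [Fintype V] [DecidableEq V] (r : ℕ) :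
    cliqueCount r (∅ : Finset (Finset V)) (r + 1) = 0 := by
  rw [cliqueCount_eq, Finset.card_eq_zero, Finset.eq_empty_iff_forall_notMem]
  intro T hT
  rw [mem_cliqueSet] at hT
  obtain ⟨S, hST, hSc⟩ := Finset.exists_subset_card_eq (by omega : r ≤ T.card)
  exact Finset.notMem_empty S (hT.2 S hST hSc)

lemma base_one {V : Type*} [Fintype V] [DecidableEq V] (G : Finset (Finset V))
    (hG : ∀ e ∈ G, e.card = 1) :
    ∃ U : Finset V, U.card = G.card ∧ G = Finset.powersetCard 1 U := by
  have h2 : G = Finset.powersetCard 1 (Finset.univ.filter (fun v => {v} ∈ G)) := by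
    ext e
    rw [Finset.mem_powersetCard]
    constructor
    · intro he
      obtain ⟨v, rfl⟩ := Finset.card_eq_one.1 (hG e he)
      exact ⟨Finset.singleton_subset_iff.2 (Finset.mem_filter.2 ⟨Finset.mem_univ v, he⟩), rfl⟩
    · rintro ⟨hsub, hc⟩
      obtain ⟨v, rfl⟩ := Finset.card_eq_one.1 hc
      exact (Finset.mem_filter.1 (Finset.singleton_subset_iff.1 hsub)).2
  refine ⟨_, ?_, h2⟩
  have h3 := congrArg Finset.card h2
  rw [Finset.card_powersetCard, Nat.choose_one_right] at h3
  exact h3.symm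


lemma stepA {V : Type*} [Fintype V] [DecidableEq V] (k : ℕ) (G : Finset (Finset V))
    (hG : ∀ e ∈ G, e.card = k + 2) (x : ℝ) (hx : (k : ℝ) + 2 ≤ x) (u : V)
    (hdeg1 : 1 ≤ degree G u) (hAu : (degree G u : ℝ) ≤ gchoose (x - 1) (k + 1)) :
    ∃ w : ℝ, ((k : ℝ) + 1 ≤ w) ∧ (w ≤ x - 1) ∧ (gchoose w (k + 1) = (degree G u : ℝ)) ∧
      (((link G u).card : ℝ) = gchoose w (k + 1)) ∧ (∀ s ∈ link G u, s.card = k + 1) := by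
  obtain ⟨w, hw1, hw2⟩ := gchoose_exists (k := k + 1) (by omega)
    (c := (degree G u : ℝ)) (by positivity)
  have hdc : (1 : ℝ) ≤ (degree G u : ℝ) := by exact_mod_cast hdeg1
  have hwge : (k : ℝ) + 1 ≤ w := by
    by_contra h
    push_neg at h
    have h1 : gchoose w (k + 1) < gchoose ((k + 1 : ℕ) : ℝ) (k + 1) :=
      gchoose_lt (by omega) hw1 (by push_cast; linarith)
    rw [gchoose_self, hw2] at h1
    linarith
  have hwle : w ≤ x - 1 := by
    by_contra h
    push_neg at h
    have h1 : gchoose (x - 1) (k + 1) < gchoose w (k + 1) :=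
      gchoose_lt (by omega) (by push_cast; linarith) h
    rw [hw2] at h1
    linarith
  exact ⟨w, hwge, hwle, hw2, by rw [card_link]; exact hw2.symm, link_sized hG u⟩

lemma mainAux {V : Type*} [Fintype V] [DecidableEq V] (N : ℕ) : ∀ (r : ℕ), 1 ≤ r →
    ∀ (G : Finset (Finset V)), (∀ e ∈ G, e.card = r) → ∀ (x : ℝ), (r : ℝ) ≤ x →
    (G.card : ℝ) = gchoose x r → r + G.card ≤ N →
    (cliqueCount r G (r + 1) : ℝ) ≤ gchoose x (r + 1) ∧
    ((cliqueCount r G (r + 1) : ℝ) = gchoose x (r + 1) →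
      ∃ S : Finset V, (S.card : ℝ) = x ∧ G = Finset.powersetCard r S) := by
  induction N with
  | zero => intro r hr G hG x hx hcard hN; omega
  | succ N IHN =>
  intro r hr G hG x hx hcard hN
  rcases r with _ | r'
  · omega
  rcases r' with _ | k
  · -- base case r = 1
    obtain ⟨U, hU1, hU2⟩ := base_one G hG
    have hx1 : (G.card : ℝ) = x := by rw [hcard, gchoose_one]
    have hcc : cliqueCount 1 G (1 + 1) = Nat.choose U.card 2 := by
      rw [cliqueCount_eq]
      have h : cliqueSet 1 G (1 + 1) = Finset.powersetCard 2 U := by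
        rw [hU2]
        exact cliqueSet_powersetCard 1 le_rfl U
      rw [h, Finset.card_powersetCard]
    have hUx : (U.card : ℝ) = x := by rw [← hx1, hU1]
    have hval : (cliqueCount 1 G (1 + 1) : ℝ) = gchoose x (1 + 1) := by
      rw [hcc, ← hUx]
      exact (gchoose_nat U.card 2).symm
    exact ⟨le_of_eq hval, fun _ => ⟨U, hUx, hU2⟩⟩
  · -- step case r = k + 2
    have hx' : (k : ℝ) + 2 ≤ x := by push_cast at hx; linarith
    by_cases hBcase : ∃ u : V, gchoose (x - 1) (k + 1) < (degree G u : ℝ)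
    · -- Case B : some vertex of large degree, strict inequality
      obtain ⟨u, hu⟩ := hBcase
      have hdnn : (0 : ℝ) ≤ gchoose (x - 1) (k + 1) := gchoose_nonneg (by push_cast; linarith)
      have hdegpos : 0 < degree G u := by
        by_contra h
        have h0 : degree G u = 0 := by omega
        rw [h0] at hu
        simp only [Nat.cast_zero] at hu
        linarith
      have hsplitn : degree G u + (G.filter (fun e => ¬ u ∈ e)).card = G.card := by
        exact Finset.card_filter_add_card_filter_not (p := fun e => u ∈ e)
      have hdle : (degree G u : ℝ) ≤ (G.card : ℝ) := by
        have : degree G u ≤ G.card := by omega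
        exact_mod_cast this
      have hxgt : (k : ℝ) + 2 < x := by
        rcases lt_or_eq_of_le hx' with h | h
        · exact h
        · exfalso
          have e1 : gchoose (x - 1) (k + 1) = 1 := by
            have hxx : x - 1 = ((k + 1 : ℕ) : ℝ) := by push_cast; linarith
            rw [hxx, gchoose_self]
          have e2 : gchoose x (k + 2) = 1 := by
            have hxx : x = ((k + 2 : ℕ) : ℝ) := by push_cast; linarith
            rw [hxx, gchoose_self]
          rw [e1] at hu
          rw [hcard, e2] at hdle
          linarith
      have hclsplit : cliqueCount (k + 2) G (k + 2 + 1)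
          = cliqueCount (k + 2) (G.filter (fun e => ¬ u ∈ e)) (k + 2 + 1)
            + degree (cliqueSet (k + 2) G (k + 2 + 1)) u := clique_split (k + 2) (by omega) G u
      have hNuleG' : degree (cliqueSet (k + 2) G (k + 2 + 1)) u
          ≤ (G.filter (fun e => ¬ u ∈ e)).card := by
        rw [← card_link]
        exact Finset.card_le_card (linkClique_subset_avoid (k + 2) G u)
      have hposx : (0 : ℝ) < gchoose x (k + 2 + 1) := gchoose_pos (by push_cast; linarith)
      by_cases hG'e : (G.filter (fun e => ¬ u ∈ e)) = ∅
      · have hK0 : cliqueCount (k + 2) G (k + 2 + 1) = 0 := by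
          rw [hclsplit, hG'e, cliqueCount_empty]
          rw [hG'e] at hNuleG'
          simp only [Finset.card_empty, Nat.le_zero] at hNuleG'
          omega
        constructor
        · rw [hK0]; push_cast; linarith
        · intro heq; rw [hK0] at heq; push_cast at heq; linarith
      · have hG'sub : ∀ e ∈ (G.filter (fun e => ¬ u ∈ e)), e.card = k + 2 :=
          fun e he => hG e (Finset.filter_subset _ _ he)
        have hG'pos : 0 < (G.filter (fun e => ¬ u ∈ e)).card :=
          Finset.card_pos.2 (Finset.nonempty_iff_ne_empty.2 hG'e)
        obtain ⟨z, hz1, hz2⟩ := gchoose_exists (k := k + 2) (by omega)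
          (c := ((G.filter (fun e => ¬ u ∈ e)).card : ℝ)) (by positivity)
        have hG'1 : (1 : ℝ) ≤ ((G.filter (fun e => ¬ u ∈ e)).card : ℝ) := by
          exact_mod_cast hG'pos
        have hzge : ((k : ℝ) + 2) ≤ z := by
          by_contra h
          push_neg at h
          have h1 : gchoose z (k + 2) < gchoose ((k + 2 : ℕ) : ℝ) (k + 2) :=
            gchoose_lt (by omega) hz1 (by push_cast; linarith)
          rw [gchoose_self, hz2] at h1
          linarith
        have hpascal : gchoose x (k + 2) = gchoose (x - 1) (k + 2) + gchoose (x - 1) (k + 1) := by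
          have h := gchoose_pascal (x - 1) (k + 1)
          rw [sub_add_cancel] at h
          exact h
        have hG'val : ((G.filter (fun e => ¬ u ∈ e)).card : ℝ)
            = gchoose x (k + 2) - (degree G u : ℝ) := by
          have h3 : (degree G u : ℝ) + ((G.filter (fun e => ¬ u ∈ e)).card : ℝ)
              = (G.card : ℝ) := by exact_mod_cast hsplitn
          rw [← hcard]; linarith
        have hzlt : z < x - 1 := by
          by_contra h
          push_neg at h
          have h1 : gchoose (x - 1) (k + 2) ≤ gchoose z (k + 2) :=
            gchoose_mono (by push_cast; linarith) h
          rw [hz2, hG'val] at h1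
          linarith
        have IH := IHN (k + 2) (by omega) (G.filter (fun e => ¬ u ∈ e)) hG'sub z
          (by push_cast; linarith) hz2.symm (by omega)
        have hle : (cliqueCount (k + 2) G (k + 2 + 1) : ℝ) ≤ gchoose (z + 1) (k + 2 + 1) := by
          have hpz : gchoose (z + 1) (k + 2 + 1) = gchoose z (k + 2 + 1) + gchoose z (k + 2) :=
            gchoose_pascal z (k + 2)
          have hNu : (degree (cliqueSet (k + 2) G (k + 2 + 1)) u : ℝ)
              ≤ ((G.filter (fun e => ¬ u ∈ e)).card : ℝ) := by exact_mod_cast hNuleG'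
          have h5 : (cliqueCount (k + 2) G (k + 2 + 1) : ℝ)
              = (cliqueCount (k + 2) (G.filter (fun e => ¬ u ∈ e)) (k + 2 + 1) : ℝ)
                + (degree (cliqueSet (k + 2) G (k + 2 + 1)) u : ℝ) := by
            exact_mod_cast congrArg (Nat.cast : ℕ → ℝ) hclsplit
          rw [h5, hpz]
          have h6 := IH.1
          linarith [hz2]
        have hfin : gchoose (z + 1) (k + 2 + 1) < gchoose x (k + 2 + 1) :=
          gchoose_lt (by omega) (by push_cast; linarith) (by linarith)
        exact ⟨le_of_lt (lt_of_le_of_lt hle hfin),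
          fun heq => absurd heq (ne_of_lt (lt_of_le_of_lt hle hfin))⟩
    · -- Case A : all degrees small
      push_neg at hBcase
      have hA : ∀ u : V, (degree G u : ℝ) ≤ gchoose (x - 1) (k + 1) := hBcase
      have hk2pos : (0 : ℝ) < (k : ℝ) + 2 := by positivity
      have hk3pos : (0 : ℝ) < (k : ℝ) + 3 := by positivity
      have hxk : (0 : ℝ) ≤ x - ((k : ℝ) + 2) := by linarith
      have keybound : ∀ u : V, (degree (cliqueSet (k + 2) G (k + 2 + 1)) u : ℝ)
          ≤ (degree G u : ℝ) * ((x - ((k : ℝ) + 2)) / ((k : ℝ) + 2)) := by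
        intro u
        by_cases h0 : degree G u = 0
        · rw [degree_cliqueSet_eq_zero (k + 2) (by omega) G u h0, h0]
          norm_num
        · obtain ⟨w, hwge, hwle, hwdeg, hlc, hls⟩ := stepA k G hG x hx' u (by omega) (hA u)
          have hlkc : (link G u).card = degree G u := card_link G u
          have hdGle : degree G u ≤ G.card := Finset.card_filter_le _ _
          have IH := (IHN (k + 1) (by omega) (link G u) hls w (by push_cast; linarith) hlc
            (by omega)).1
          have hNu : degree (cliqueSet (k + 2) G (k + 2 + 1)) u
              ≤ cliqueCount (k + 1) (link G u) (k + 1 + 1) := by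
            rw [← card_link, cliqueCount_eq]
            exact Finset.card_le_card (linkClique_subset_cliqueSet (k + 1) G u)
          have hsucc : gchoose w (k + 1 + 1) = gchoose w (k + 1) * (w - ((k : ℝ) + 1)) / ((k : ℝ) + 2) := by
            have h := gchoose_succ w (k + 1)
            rw [h]; push_cast; ring
          calc (degree (cliqueSet (k + 2) G (k + 2 + 1)) u : ℝ)
              ≤ (cliqueCount (k + 1) (link G u) (k + 1 + 1) : ℝ) := by exact_mod_cast hNu
            _ ≤ gchoose w (k + 1 + 1) := IH
            _ = (degree G u : ℝ) * (w - ((k : ℝ) + 1)) / ((k : ℝ) + 2) := by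
                rw [hsucc, hwdeg]
            _ ≤ (degree G u : ℝ) * ((x - ((k : ℝ) + 2)) / ((k : ℝ) + 2)) := by
                rw [mul_div_assoc]
                have hd0 : (0 : ℝ) ≤ (degree G u : ℝ) := by positivity
                exact mul_le_mul_of_nonneg_left
                  ((div_le_div_iff_of_pos_right hk2pos).mpr (by linarith)) hd0
      have hsumK : ∑ u : V, degree (cliqueSet (k + 2) G (k + 2 + 1)) u
          = (k + 2 + 1) * (cliqueSet (k + 2) G (k + 2 + 1)).card :=
        sum_degree _ (k + 2 + 1) (fun T hT => (mem_cliqueSet.1 hT).1)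
      have hsumG : ∑ u : V, degree G u = (k + 2) * G.card := sum_degree G (k + 2) hG
      have h1 : ((k : ℝ) + 3) * (cliqueCount (k + 2) G (k + 2 + 1) : ℝ)
          = ∑ u : V, (degree (cliqueSet (k + 2) G (k + 2 + 1)) u : ℝ) := by
        rw [← Nat.cast_sum, hsumK, cliqueCount_eq]
        push_cast
        ring
      have h2 : ∑ u : V, (degree G u : ℝ) = ((k : ℝ) + 2) * (G.card : ℝ) := by
        rw [← Nat.cast_sum, hsumG]
        push_cast
        ring
      have h3 : ∑ u : V, (degree (cliqueSet (k + 2) G (k + 2 + 1)) u : ℝ)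
          ≤ ∑ u : V, (degree G u : ℝ) * ((x - ((k : ℝ) + 2)) / ((k : ℝ) + 2)) :=
        Finset.sum_le_sum (fun u _ => keybound u)
      have h4 : ∑ u : V, (degree G u : ℝ) * ((x - ((k : ℝ) + 2)) / ((k : ℝ) + 2))
          = (G.card : ℝ) * (x - ((k : ℝ) + 2)) := by
        rw [← Finset.sum_mul, h2]
        field_simp
      have h5 : (G.card : ℝ) * (x - ((k : ℝ) + 2)) = ((k : ℝ) + 3) * gchoose x (k + 2 + 1) := by
        have hs := gchoose_succ x (k + 2)
        rw [hcard, hs]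
        push_cast
        field_simp
        ring
      have hKle : (cliqueCount (k + 2) G (k + 2 + 1) : ℝ) ≤ gchoose x (k + 2 + 1) := by
        apply le_of_mul_le_mul_left _ hk3pos
        calc ((k : ℝ) + 3) * (cliqueCount (k + 2) G (k + 2 + 1) : ℝ)
            = ∑ u : V, (degree (cliqueSet (k + 2) G (k + 2 + 1)) u : ℝ) := h1
          _ ≤ ∑ u : V, (degree G u : ℝ) * ((x - ((k : ℝ) + 2)) / ((k : ℝ) + 2)) := h3
          _ = (G.card : ℝ) * (x - ((k : ℝ) + 2)) := h4
          _ = ((k : ℝ) + 3) * gchoose x (k + 2 + 1) := h5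
      refine ⟨hKle, fun hKeq => ?_⟩
      -- equality case
      have hzero : ∑ u : V, ((degree G u : ℝ) * ((x - ((k : ℝ) + 2)) / ((k : ℝ) + 2))
          - (degree (cliqueSet (k + 2) G (k + 2 + 1)) u : ℝ)) = 0 := by
        rw [Finset.sum_sub_distrib, h4]
        rw [← h1, hKeq, h5]
        ring
      have htermwise : ∀ u : V, (degree (cliqueSet (k + 2) G (k + 2 + 1)) u : ℝ)
          = (degree G u : ℝ) * ((x - ((k : ℝ) + 2)) / ((k : ℝ) + 2)) := by
        have hterm := (Finset.sum_eq_zero_iff_of_nonneg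
          (fun u _ => sub_nonneg.2 (keybound u))).1 hzero
        intro u
        have hu := hterm u (Finset.mem_univ u)
        linarith [hu]
      -- pick a vertex of positive degree
      have hG1 : (1 : ℝ) ≤ (G.card : ℝ) := by
        rw [hcard]
        calc (1 : ℝ) = gchoose ((k + 2 : ℕ) : ℝ) (k + 2) := (gchoose_self _).symm
          _ ≤ gchoose x (k + 2) := gchoose_mono (by push_cast; linarith) (by push_cast; linarith)
      have hGne : G.Nonempty := Finset.card_pos.1 (by exact_mod_cast hG1)
      obtain ⟨e, he⟩ := hGne
      have hecard := hG e he
      obtain ⟨u₀, hu₀e⟩ := Finset.card_pos.1 (by omega : 0 < e.card)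
      have hdeg1 : 1 ≤ degree G u₀ :=
        Finset.card_pos.2 ⟨e, Finset.mem_filter.2 ⟨he, hu₀e⟩⟩
      obtain ⟨w, hwge, hwle, hwdeg, hlc, hls⟩ := stepA k G hG x hx' u₀ hdeg1 (hA u₀)
      have hlkc : (link G u₀).card = degree G u₀ := card_link G u₀
      have hdGle : degree G u₀ ≤ G.card := Finset.card_filter_le _ _
      have IH := IHN (k + 1) (by omega) (link G u₀) hls w (by push_cast; linarith) hlc (by omega)
      have hNu : degree (cliqueSet (k + 2) G (k + 2 + 1)) u₀
          ≤ cliqueCount (k + 1) (link G u₀) (k + 1 + 1) := by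
        rw [← card_link, cliqueCount_eq]
        exact Finset.card_le_card (linkClique_subset_cliqueSet (k + 1) G u₀)
      have hsucc : gchoose w (k + 1 + 1)
          = gchoose w (k + 1) * (w - ((k : ℝ) + 1)) / ((k : ℝ) + 2) := by
        have h := gchoose_succ w (k + 1)
        rw [h]; push_cast; ring
      have c1 : (degree (cliqueSet (k + 2) G (k + 2 + 1)) u₀ : ℝ)
          ≤ (cliqueCount (k + 1) (link G u₀) (k + 1 + 1) : ℝ) := by exact_mod_cast hNu
      have c2 : (cliqueCount (k + 1) (link G u₀) (k + 1 + 1) : ℝ) ≤ gchoose w (k + 1 + 1) := IH.1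
      have c3 : gchoose w (k + 1 + 1)
          = (degree G u₀ : ℝ) * (w - ((k : ℝ) + 1)) / ((k : ℝ) + 2) := by rw [hsucc, hwdeg]
      have hd0 : (0 : ℝ) < (degree G u₀ : ℝ) := by exact_mod_cast hdeg1
      have c4 : (degree G u₀ : ℝ) * (w - ((k : ℝ) + 1)) / ((k : ℝ) + 2)
          ≤ (degree G u₀ : ℝ) * ((x - ((k : ℝ) + 2)) / ((k : ℝ) + 2)) := by
        rw [mul_div_assoc]
        exact mul_le_mul_of_nonneg_left
          ((div_le_div_iff_of_pos_right hk2pos).mpr (by linarith)) (le_of_lt hd0)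
      have c5 := htermwise u₀
      have hCLeq : (cliqueCount (k + 1) (link G u₀) (k + 1 + 1) : ℝ) = gchoose w (k + 1 + 1) :=
        le_antisymm c2 (by linarith)
      have hNuCL : (degree (cliqueSet (k + 2) G (k + 2 + 1)) u₀ : ℝ)
          = (cliqueCount (k + 1) (link G u₀) (k + 1 + 1) : ℝ) := le_antisymm c1 (by linarith)
      have hw : w = x - 1 := by
        have h6 : (degree G u₀ : ℝ) * (w - ((k : ℝ) + 1)) / ((k : ℝ) + 2)
            = (degree G u₀ : ℝ) * ((x - ((k : ℝ) + 2)) / ((k : ℝ) + 2)) := by linarith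
        rw [mul_div_assoc] at h6
        have h7 := mul_left_cancel₀ (ne_of_gt hd0) h6
        have h8 : w - ((k : ℝ) + 1) = x - ((k : ℝ) + 2) := by
          field_simp at h7
          linarith
        linarith
      obtain ⟨S₀, hS₀c, hS₀⟩ := IH.2 hCLeq
      -- surjectivity of the erase map onto link cliques
      have hNuCLn : (link (cliqueSet (k + 2) G (k + 2 + 1)) u₀).card
          = (cliqueSet (k + 1) (link G u₀) (k + 1 + 1)).card := by
        rw [card_link]
        exact_mod_cast hNuCL
      have hseteq : link (cliqueSet (k + 2) G (k + 2 + 1)) u₀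
          = cliqueSet (k + 1) (link G u₀) (k + 1 + 1) :=
        Finset.eq_of_subset_of_card_le (linkClique_subset_cliqueSet (k + 1) G u₀)
          (le_of_eq hNuCLn.symm)
      have hcliqueG : ∀ s ∈ cliqueSet (k + 1) (link G u₀) (k + 1 + 1), s ∈ G := by
        intro s hs
        rw [← hseteq] at hs
        exact (Finset.mem_filter.1 (linkClique_subset_avoid (k + 2) G u₀ hs)).1
      have hS₀k : k + 1 ≤ S₀.card := by
        have hq : ((k : ℝ) + 1) ≤ (S₀.card : ℝ) := by rw [hS₀c]; linarith
        exact_mod_cast hq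
      have hu₀S₀ : u₀ ∉ S₀ := by
        intro hu
        obtain ⟨P, hP1, hP2, hP3⟩ := Finset.exists_subsuperset_card_eq
          (Finset.singleton_subset_iff.2 hu) (by simp) hS₀k
        have hPl : P ∈ link G u₀ := by
          rw [hS₀]
          exact Finset.mem_powersetCard.2 ⟨hP2, hP3⟩
        exact (mem_link.1 hPl).1 (hP1 (Finset.mem_singleton_self u₀))
      have hScard : (insert u₀ S₀).card = S₀.card + 1 := Finset.card_insert_of_notMem hu₀S₀
      have hSx : ((insert u₀ S₀).card : ℝ) = x := by
        rw [hScard]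
        push_cast
        linarith [hS₀c, hw]
      have hsub : Finset.powersetCard (k + 2) (insert u₀ S₀) ⊆ G := by
        intro e' he'
        obtain ⟨heS, hec⟩ := Finset.mem_powersetCard.1 he'
        by_cases hue : u₀ ∈ e'
        · have h1 : e'.erase u₀ ∈ Finset.powersetCard (k + 1) S₀ := by
            rw [Finset.mem_powersetCard]
            constructor
            · intro t ht
              obtain ⟨htne, htm⟩ := Finset.mem_erase.1 ht
              rcases Finset.mem_insert.1 (heS htm) with h | h
              · exact absurd h htne
              · exact h
            · rw [Finset.card_erase_of_mem hue, hec]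
              omega
          rw [← hS₀] at h1
          have h2 := (mem_link.1 h1).2
          rwa [Finset.insert_erase hue] at h2
        · have heS₀ : e' ⊆ S₀ := by
            intro t ht
            rcases Finset.mem_insert.1 (heS ht) with h | h
            · exact absurd (h ▸ ht) hue
            · exact h
          apply hcliqueG
          rw [mem_cliqueSet]
          refine ⟨hec, fun s hse hsc => ?_⟩
          rw [hS₀]
          exact Finset.mem_powersetCard.2 ⟨hse.trans heS₀, hsc⟩
      have hcards : G.card = (Finset.powersetCard (k + 2) (insert u₀ S₀)).card := by
        rw [Finset.card_powersetCard]
        have hq : (G.card : ℝ) = (Nat.choose (insert u₀ S₀).card (k + 2) : ℝ) := by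
          rw [hcard, ← hSx, gchoose_nat]
        exact_mod_cast hq
      have hfin : Finset.powersetCard (k + 2) (insert u₀ S₀) = G :=
        Finset.eq_of_subset_of_card_le hsub (le_of_eq hcards)
      exact ⟨insert u₀ S₀, hSx, hfin.symm⟩

theorem main {V : Type*} [Fintype V] [DecidableEq V] (r : ℕ) (hr : 1 ≤ r)
    (G : Finset (Finset V)) (hG : ∀ e ∈ G, e.card = r) (x : ℝ) (hx : (r : ℝ) ≤ x)
    (hcard : (G.card : ℝ) = gchoose x r) :
    (cliqueCount r G (r + 1) : ℝ) ≤ gchoose x (r + 1) ∧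
    ((cliqueCount r G (r + 1) : ℝ) = gchoose x (r + 1) →
      ∃ S : Finset V, (S.card : ℝ) = x ∧ G = Finset.powersetCard r S) :=
  mainAux (r + G.card) r hr G hG x hx hcard le_rfl

/-- Lovász's version of the Kruskal–Katona theorem: if `G` is an `r`-graph with
`C(x,r)` edges, `x ≥ r`, then `K^r_{r+1}(G) ≤ C(x,r+1)`, with equality iff `x` is an
integer and `G` is the complete `r`-graph on a set of `x` vertices. -/
theorem stmt0 {V : Type*} [Fintype V] [DecidableEq V] (r : ℕ) (hr : 1 ≤ r)
    (G : Finset (Finset V)) (hG : ∀ e ∈ G, e.card = r)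
    (x : ℝ) (hx : (r : ℝ) ≤ x) (hcard : (G.card : ℝ) = gchoose x r) :
    (cliqueCount r G (r + 1) : ℝ) ≤ gchoose x (r + 1) ∧
    ((cliqueCount r G (r + 1) : ℝ) = gchoose x (r + 1) ↔
      ∃ S : Finset V, (S.card : ℝ) = x ∧ G = Finset.powersetCard r S) := by
  obtain ⟨h1, h2⟩ := main r hr G hG x hx hcard
  refine ⟨h1, ⟨h2, ?_⟩⟩
  rintro ⟨S, hSx, rfl⟩
  have hcc : cliqueCount r (Finset.powersetCard r S) (r + 1) = Nat.choose S.card (r + 1) := by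
    rw [cliqueCount_eq, cliqueSet_powersetCard r hr S, Finset.card_powersetCard]
  rw [hcc, ← hSx]
  exact (gchoose_nat S.card (r + 1)).symm
end

section
/- Suppose 0 ≤ s ≤ r < n/2 and G is the r-graph on the vertex set [n] obtained from the complete r-graph K^r_n by deleting a family F of r-element sets with |F| < C(r,s)⁻¹·C(n,r−s). Then the rank of the inclusion matrix M^r_s(G) over ℚ equals C(n,s). -/
/-- The inclusion matrix `M^r_s(G)` over `ℚ`: rows indexed by the edges of `G`,
columns indexed by the `s`-element subsets of the vertex set; entry `1` if the
column set is contained in the row edge, `0` otherwise. -/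
def inclMatrix {V : Type*} [Fintype V] [DecidableEq V]
    (G : Finset (Finset V)) (s : ℕ) :
    Matrix {e // e ∈ G} {S // S ∈ Finset.powersetCard s (Finset.univ : Finset V)} ℚ :=
  fun e S => if (S : Finset V) ⊆ (e : Finset V) then 1 else 0

open Finset

lemma lemB_pointwise (s k n i : ℕ) (hi : i < k) (hn : 2*s + 2*k < n) :
    (k - i) * (n - i) ≤ (s + k - i) * (n - 2*s - i) := by
  obtain ⟨c, rfl⟩ : ∃ c, k = i + 1 + c := ⟨k - i - 1, by omega⟩
  obtain ⟨d, rfl⟩ : ∃ d, n = 2*s + 2*(i+1+c) + 1 + d := ⟨n - (2*s+2*(i+1+c)+1), by omega⟩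
  have h1 : i + 1 + c - i = c + 1 := by omega
  have h2 : 2*s + 2*(i+1+c) + 1 + d - i = 2*s + i + 2*c + 3 + d := by omega
  have h3 : s + (i + 1 + c) - i = s + c + 1 := by omega
  have h4 : 2*s + 2*(i+1+c) + 1 + d - 2*s - i = i + 2*c + 3 + d := by omega
  rw [h1, h2, h3, h4]
  nlinarith

lemma lemB (n r s : ℕ) (hs : s ≤ r) (hn : 2*r < n) :
    n.choose (r-s) ≤ r.choose s * (n-2*s).choose (r-s) := by
  set k := r - s with hk
  have hr : r = s + k := by omega
  have key : Nat.factorial k * n.descFactorial k ≤ r.descFactorial k * (n-2*s).descFactorial k := by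
    have hfac : Nat.factorial k = ∏ i ∈ range k, (k - i) := by
      rw [← Nat.descFactorial_self, Nat.descFactorial_eq_prod_range]
    rw [hfac, Nat.descFactorial_eq_prod_range, Nat.descFactorial_eq_prod_range,
      Nat.descFactorial_eq_prod_range, ← Finset.prod_mul_distrib, ← Finset.prod_mul_distrib]
    apply Finset.prod_le_prod'
    intro i hi
    rw [Finset.mem_range] at hi
    rw [hr]
    exact lemB_pointwise s k n i hi (by omega)
  have h1 : n.descFactorial k = Nat.factorial k * n.choose k := Nat.descFactorial_eq_factorial_mul_choose n k
  have h2 : r.descFactorial k = Nat.factorial k * r.choose k := Nat.descFactorial_eq_factorial_mul_choose r k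
  have h3 : (n-2*s).descFactorial k = Nat.factorial k * (n-2*s).choose k :=
    Nat.descFactorial_eq_factorial_mul_choose _ k
  rw [h1, h2, h3] at key
  have hkk : 0 < Nat.factorial k * Nat.factorial k := Nat.mul_pos (Nat.factorial_pos k) (Nat.factorial_pos k)
  have : n.choose k ≤ r.choose k * (n-2*s).choose k := by
    refine Nat.le_of_mul_le_mul_left ?_ hkk
    calc Nat.factorial k * Nat.factorial k * n.choose k = Nat.factorial k * (Nat.factorial k * n.choose k) := by ring
      _ ≤ Nat.factorial k * r.choose k * (Nat.factorial k * (n-2*s).choose k) := key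
      _ = Nat.factorial k * Nat.factorial k * (r.choose k * (n-2*s).choose k) := by ring
  have hsym : r.choose k = r.choose s := by
    rw [hk]
    exact Nat.choose_symm hs
  rwa [hsym] at this

lemma choose_le_choose_right (n : ℕ) : ∀ {a b : ℕ}, a ≤ b → 2*b ≤ n → n.choose a ≤ n.choose b := by
  intro a b
  induction b with
  | zero =>
    intro h _
    have ha : a = 0 := by omega
    simp [ha]
  | succ b ihb =>
    intro h hn
    rcases Nat.eq_or_lt_of_le h with rfl | h'
    · exact le_rfl
    · have : n.choose a ≤ n.choose b := ihb (by omega) (by omega)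
      refine this.trans (Nat.choose_le_succ_of_lt_half_left ?_)
      have : b + 1 ≤ n / 2 := Nat.le_div_iff_mul_le (by norm_num) |>.mpr (by omega)
      omega

lemma const_of_swap {V : Type*} [DecidableEq V] (A : Finset V) (x : Finset V → ℚ) (s : ℕ)
    (h : ∀ u ∈ A, ∀ v ∈ A, ∀ S' : Finset V, S' ⊆ A → S'.card = s → u ∉ S' → v ∉ S' →
      x (insert u S') = x (insert v S')) :
    ∀ S T : Finset V, S ⊆ A → T ⊆ A → S.card = s + 1 → T.card = s + 1 → x S = x T := by
  suffices H : ∀ k (S T : Finset V), S ⊆ A → T ⊆ A → S.card = s + 1 → T.card = s + 1 →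
      (S \ T).card = k → x S = x T by
    intro S T h1 h2 h3 h4
    exact H (S \ T).card S T h1 h2 h3 h4 rfl
  intro k
  induction k with
  | zero =>
    intro S T hSA hTA hS hT hk
    have hsub : S ⊆ T := by
      rw [← Finset.sdiff_eq_empty_iff_subset]
      exact Finset.card_eq_zero.mp hk
    rw [Finset.eq_of_subset_of_card_le hsub (by omega)]
  | succ k ih =>
    intro S T hSA hTA hS hT hk
    obtain ⟨u, hu⟩ : (S \ T).Nonempty := Finset.card_pos.mp (by omega)
    have huS : u ∈ S := (Finset.mem_sdiff.mp hu).1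
    have huT : u ∉ T := (Finset.mem_sdiff.mp hu).2
    obtain ⟨v, hv⟩ : (T \ S).Nonempty := by
      apply Finset.card_pos.mp
      rw [← Finset.card_sdiff_comm (by omega)]
      omega
    have hvT : v ∈ T := (Finset.mem_sdiff.mp hv).1
    have hvS : v ∉ S := (Finset.mem_sdiff.mp hv).2
    have hvE : v ∉ S.erase u := fun hx => hvS (Finset.mem_of_mem_erase hx)
    set S₂ := insert v (S.erase u) with hS₂
    have hstep : x S = x S₂ := by
      conv_lhs => rw [← Finset.insert_erase huS]
      exact h u (hSA huS) v (hTA hvT) (S.erase u) ((Finset.erase_subset _ _).trans hSA)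
        (by rw [Finset.card_erase_of_mem huS, hS]; omega) (Finset.notMem_erase _ _) hvE
    rw [hstep]
    apply ih
    · exact Finset.insert_subset (hTA hvT) ((Finset.erase_subset _ _).trans hSA)
    · exact hTA
    · rw [Finset.card_insert_of_notMem hvE, Finset.card_erase_of_mem huS, hS]; omega
    · exact hT
    · have : S₂ \ T = (S \ T).erase u := by
        ext a
        simp only [hS₂, Finset.mem_sdiff, Finset.mem_insert, Finset.mem_erase]
        constructor
        · rintro ⟨(rfl | ha), haT⟩
          · exact absurd hvT haT
          · exact ⟨ha.1, ha.2, haT⟩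
        · rintro ⟨hau, haS, haT⟩
          exact ⟨Or.inr ⟨hau, haS⟩, haT⟩
      rw [this, Finset.card_erase_of_mem hu, hk]; omega

lemma sum_powersetCard_insert {V : Type*} [DecidableEq V] (x : Finset V → ℚ) (s : ℕ)
    {w : V} {e : Finset V} (hw : w ∉ e) :
    ∑ S ∈ Finset.powersetCard (s+1) (insert w e), x S
      = (∑ S ∈ Finset.powersetCard (s+1) e, x S)
        + ∑ S ∈ Finset.powersetCard s e, x (insert w S) := by
  rw [Finset.powersetCard_succ_insert hw, Finset.sum_union, Finset.sum_image]
  · intro a ha b hb hab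
    have ha' : w ∉ a := fun h => hw ((Finset.mem_powersetCard.mp ha).1 h)
    have hb' : w ∉ b := fun h => hw ((Finset.mem_powersetCard.mp hb).1 h)
    rw [← Finset.erase_insert ha', hab, Finset.erase_insert hb']
  · rw [Finset.disjoint_left]
    intro a ha hb
    obtain ⟨b, hbmem, rfl⟩ := Finset.mem_image.mp hb
    exact hw ((Finset.mem_powersetCard.mp ha).1 (Finset.mem_insert_self w b))

lemma lemA {V : Type*} [Fintype V] [DecidableEq V] (s : ℕ) :
    ∀ (r : ℕ) (A : Finset V) (x : Finset V → ℚ), s ≤ r → 2 * r < A.card →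
    (∃ S ∈ Finset.powersetCard s A, x S ≠ 0) →
    (A.card - 2*s).choose (r - s) ≤
      ((Finset.powersetCard r A).filter
        (fun e => (∑ S ∈ Finset.powersetCard s e, x S) ≠ 0)).card := by
  induction s with
  | zero =>
    rintro r A x _ _ ⟨S, hS, hxS⟩
    have hSe : S = ∅ := Finset.card_eq_zero.mp (Finset.mem_powersetCard.mp hS).2
    subst hSe
    have hall : ∀ e ∈ Finset.powersetCard r A,
        (∑ S ∈ Finset.powersetCard 0 e, x S) ≠ 0 := by
      intro e _
      simpa [Finset.powersetCard_zero] using hxS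
    rw [Finset.filter_true_of_mem hall, Finset.card_powersetCard]
    simp
  | succ s ih =>
    intro r A x hs hr hex
    by_cases hconst : ∀ u ∈ A, ∀ v ∈ A, ∀ S' : Finset V, S' ⊆ A → S'.card = s → u ∉ S' →
        v ∉ S' → x (insert u S') = x (insert v S')
    · obtain ⟨S₀, hS₀, hx₀⟩ := hex
      rw [Finset.mem_powersetCard] at hS₀
      have hcon := const_of_swap A x s hconst
      have hall : ∀ e ∈ Finset.powersetCard r A,
          (∑ S ∈ Finset.powersetCard (s+1) e, x S) ≠ 0 := by
        intro e he
        rw [Finset.mem_powersetCard] at he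
        have hc : ∀ S ∈ Finset.powersetCard (s+1) e, x S = x S₀ := by
          intro S hS
          rw [Finset.mem_powersetCard] at hS
          exact hcon S S₀ (hS.1.trans he.1) hS₀.1 hS.2 hS₀.2
        rw [Finset.sum_congr rfl hc, Finset.sum_const, Finset.card_powersetCard, he.2,
          nsmul_eq_mul]
        exact mul_ne_zero (Nat.cast_ne_zero.mpr (Nat.choose_pos hs).ne') hx₀
      rw [Finset.filter_true_of_mem hall, Finset.card_powersetCard]
      calc (A.card - 2*(s+1)).choose (r - (s+1))
          ≤ A.card.choose (r - (s+1)) := Nat.choose_le_choose _ (Nat.sub_le _ _)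
        _ ≤ A.card.choose r := choose_le_choose_right _ (by omega) (by omega)
    · push_neg at hconst
      obtain ⟨u, hu, v, hv, S', hS'A, hS'card, huS', hvS', hne⟩ := hconst
      have huv : u ≠ v := fun h => hne (h ▸ rfl)
      set A' := (A.erase u).erase v with hA'
      have hvA' : v ∈ A.erase u := Finset.mem_erase.mpr ⟨huv.symm, hv⟩
      have hA'card : A'.card = A.card - 2 := by
        rw [hA', Finset.card_erase_of_mem hvA', Finset.card_erase_of_mem hu]; omega
      have huA' : u ∉ A' := fun h =>
        Finset.notMem_erase u A (Finset.mem_of_mem_erase h)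
      have hvA'' : v ∉ A' := Finset.notMem_erase v _
      have hA'A : A' ⊆ A := (Finset.erase_subset _ _).trans (Finset.erase_subset _ _)
      set x' : Finset V → ℚ := fun S => x (insert u S) - x (insert v S) with hx'
      have hexA' : ∃ S ∈ Finset.powersetCard s A', x' S ≠ 0 := by
        refine ⟨S', Finset.mem_powersetCard.mpr ⟨?_, hS'card⟩, sub_ne_zero.mpr hne⟩
        intro a ha
        exact Finset.mem_erase.mpr ⟨fun h => hvS' (h ▸ ha),
          Finset.mem_erase.mpr ⟨fun h => huS' (h ▸ ha), hS'A ha⟩⟩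
      have key := ih (r-1) A' x' (by omega) (by rw [hA'card]; omega) hexA'
      -- the injection
      set E' := ((Finset.powersetCard (r-1) A').filter
        (fun e => (∑ S ∈ Finset.powersetCard s e, x' S) ≠ 0)) with hE'
      set E := ((Finset.powersetCard r A).filter
        (fun e => (∑ S ∈ Finset.powersetCard (s+1) e, x S) ≠ 0)) with hE
      have hcard : E'.card ≤ E.card := by
        apply Finset.card_le_card_of_injOn
          (fun e' => if (∑ S ∈ Finset.powersetCard (s+1) (insert u e'), x S) ≠ 0
            then insert u e' else insert v e')
        · intro e' he'
          obtain ⟨he'm, he'ne⟩ := Finset.mem_filter.mp he'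
          obtain ⟨he'sub, he'card⟩ := Finset.mem_powersetCard.mp he'm
          have hue' : u ∉ e' := fun h => huA' (he'sub h)
          have hve' : v ∉ e' := fun h => hvA'' (he'sub h)
          have hmemu : insert u e' ∈ Finset.powersetCard r A :=
            Finset.mem_powersetCard.mpr ⟨Finset.insert_subset hu (he'sub.trans hA'A),
              by rw [Finset.card_insert_of_notMem hue', he'card]; omega⟩
          have hmemv : insert v e' ∈ Finset.powersetCard r A :=
            Finset.mem_powersetCard.mpr ⟨Finset.insert_subset hv (he'sub.trans hA'A),
              by rw [Finset.card_insert_of_notMem hve', he'card]; omega⟩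
          have hsum : (∑ S ∈ Finset.powersetCard (s+1) (insert u e'), x S)
              - (∑ S ∈ Finset.powersetCard (s+1) (insert v e'), x S)
              = ∑ S ∈ Finset.powersetCard s e', x' S := by
            rw [sum_powersetCard_insert x s hue', sum_powersetCard_insert x s hve', hx']
            rw [Finset.sum_sub_distrib]
            ring
          by_cases hcnd : (∑ S ∈ Finset.powersetCard (s+1) (insert u e'), x S) ≠ 0
          · simp only [if_pos hcnd]
            exact Finset.mem_filter.mpr ⟨hmemu, hcnd⟩
          · simp only [if_neg hcnd]
            push_neg at hcnd
            refine Finset.mem_filter.mpr ⟨hmemv, fun h0 => he'ne ?_⟩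
            rw [← hsum, hcnd, h0, sub_zero]
        · intro e₁ h₁ e₂ h₂ hfe
          obtain ⟨h₁m, -⟩ := Finset.mem_filter.mp h₁
          obtain ⟨h₁sub, -⟩ := Finset.mem_powersetCard.mp h₁m
          obtain ⟨h₂m, -⟩ := Finset.mem_filter.mp h₂
          obtain ⟨h₂sub, -⟩ := Finset.mem_powersetCard.mp h₂m
          have hue₁ : u ∉ e₁ := fun h => huA' (h₁sub h)
          have hve₁ : v ∉ e₁ := fun h => hvA'' (h₁sub h)
          have hue₂ : u ∉ e₂ := fun h => huA' (h₂sub h)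
          have hve₂ : v ∉ e₂ := fun h => hvA'' (h₂sub h)
          simp only at hfe
          split_ifs at hfe
          · rw [← Finset.erase_insert hue₁, hfe, Finset.erase_insert hue₂]
          · exfalso
            have : u ∈ insert v e₂ := hfe ▸ Finset.mem_insert_self u e₁
            rcases Finset.mem_insert.mp this with h | h
            · exact huv h
            · exact hue₂ h
          · exfalso
            have : u ∈ insert v e₁ := hfe ▸ Finset.mem_insert_self u e₂
            rcases Finset.mem_insert.mp this with h | h
            · exact huv h
            · exact hue₁ h
          · rw [← Finset.erase_insert hve₁, hfe, Finset.erase_insert hve₂]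
      refine le_trans ?_ (le_trans key hcard)
      rw [hA'card]
      apply le_of_eq
      congr 1 <;> omega

/-- Rigidity of complete inclusion matrices: if `0 ≤ s ≤ r < n/2` and
`G = K^r_n \ F` with `|F| < C(r,s)⁻¹·C(n,r-s)`, then `rk M^r_s(G) = C(n,s)`. -/
theorem stmt5 (n r s : ℕ) (hs : s ≤ r) (hrn : (r : ℝ) < n / 2)
    (F : Finset (Finset (Fin n)))
    (hF : F ⊆ Finset.powersetCard r (Finset.univ : Finset (Fin n)))
    (hFcard : (F.card : ℝ) < ((r.choose s : ℝ))⁻¹ * (n.choose (r - s)))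
    (G : Finset (Finset (Fin n)))
    (hG : G = Finset.powersetCard r (Finset.univ : Finset (Fin n)) \ F) :
    (inclMatrix G s).rank = n.choose s := by
  classical
  have hn : 2 * r < n := by
    have h2 : (2 * r : ℝ) < n := by push_cast; linarith
    exact_mod_cast h2
  -- injectivity of the associated linear map
  have hker : Function.Injective (inclMatrix G s).mulVecLin := by
    rw [← LinearMap.ker_eq_bot, LinearMap.ker_eq_bot']
    intro x hx
    by_contra hx0
    set xt : Finset (Fin n) → ℚ :=
      fun S => if h : S ∈ Finset.powersetCard s (Finset.univ : Finset (Fin n))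
        then x ⟨S, h⟩ else 0 with hxt
    have hex : ∃ S ∈ Finset.powersetCard s (Finset.univ : Finset (Fin n)), xt S ≠ 0 := by
      obtain ⟨S, hS⟩ : ∃ S, x S ≠ 0 := by
        by_contra h
        push_neg at h
        exact hx0 (funext fun S => h S)
      refine ⟨S.1, S.2, ?_⟩
      rw [hxt]
      simpa [S.2] using hS
    have key := lemA s r Finset.univ xt hs (by simpa using hn) hex
    set E := ((Finset.powersetCard r (Finset.univ : Finset (Fin n))).filter
      (fun e => (∑ S ∈ Finset.powersetCard s e, xt S) ≠ 0)) with hEdef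
    have hEF : E ⊆ F := by
      intro e he
      obtain ⟨hem, hene⟩ := Finset.mem_filter.mp he
      by_contra heF
      have heG : e ∈ G := by
        rw [hG, Finset.mem_sdiff]
        exact ⟨hem, heF⟩
      apply hene
      have hrow := congrFun hx ⟨e, heG⟩
      have hval : ((inclMatrix G s).mulVecLin x) ⟨e, heG⟩
          = ∑ S ∈ Finset.powersetCard s e, xt S := by
        rw [Matrix.mulVecLin_apply]
        have hpc : Finset.powersetCard s e
            = (Finset.powersetCard s (Finset.univ : Finset (Fin n))).filter
              (fun S => S ⊆ e) := by
          ext S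
          simp only [Finset.mem_powersetCard, Finset.mem_filter]
          constructor
          · rintro ⟨h1, h2⟩; exact ⟨⟨Finset.subset_univ S, h2⟩, h1⟩
          · rintro ⟨⟨-, h2⟩, h1⟩; exact ⟨h1, h2⟩
        rw [hpc, Finset.sum_filter,
          Finset.sum_subtype (Finset.powersetCard s (Finset.univ : Finset (Fin n)))
            (fun S => Iff.rfl) (fun S => if S ⊆ e then xt S else 0)]
        simp only [Matrix.mulVec, dotProduct, inclMatrix]
        apply Finset.sum_congr rfl
        intro S _
        rw [hxt]
        by_cases hSe : (S : Finset (Fin n)) ⊆ e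
        · simp [hSe, S.2]
        · simp [hSe]
      rw [hval] at hrow
      simpa using hrow
    have hcard2 : (n - 2*s).choose (r - s) ≤ F.card := by
      refine le_trans ?_ (Finset.card_le_card hEF)
      simpa using key
    have hB := lemB n r s hs hn
    have hpos : (0 : ℝ) < (r.choose s : ℝ) := by
      exact_mod_cast Nat.choose_pos hs
    have hlt : (F.card : ℝ) < ((n - 2*s).choose (r - s) : ℝ) := by
      calc (F.card : ℝ) < ((r.choose s : ℝ))⁻¹ * (n.choose (r - s)) := hFcard
        _ ≤ ((r.choose s : ℝ))⁻¹ * ((r.choose s) * ((n - 2*s).choose (r - s))) := by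
            apply mul_le_mul_of_nonneg_left _ (by positivity)
            exact_mod_cast hB
        _ = ((n - 2*s).choose (r - s) : ℝ) := by field_simp
    have : (F.card : ℝ) < (F.card : ℝ) :=
      lt_of_lt_of_le hlt (by exact_mod_cast hcard2)
    exact lt_irrefl _ this
  have hrank : (inclMatrix G s).rank
      = Module.finrank ℚ (LinearMap.range (inclMatrix G s).mulVecLin) := rfl
  rw [hrank, LinearMap.finrank_range_of_inj hker,
    Module.finrank_fintype_fun_eq_card, Fintype.card_coe, Finset.card_powersetCard,
    Finset.card_univ, Fintype.card_fin]
end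

section
/- Suppose 0 < ε < 1/2, r ≥ 2, x ≥ (1+ε)(r+1), 0 < δ < (ε/6r)², and G is an r-graph with exactly C(x,r) edges such that K^r_{r+1}(G) > (1−δ)·C(x,r+1). Then the sum of the degrees d(v) over all vertices v with d(v) < C((1−δ^{1/2})(x−1), r−1) is at most δ^{1/2}·x·C(x−1,r−1). -/
/-- The degree of a vertex: the number of edges of `G` containing `v`. -/
def deg {V : Type*} [Fintype V] [DecidableEq V]
    (G : Finset (Finset V)) (v : V) : ℕ :=
  (G.filter fun e => v ∈ e).card


attribute [-instance] instDecidableEqFin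

namespace gchoose

lemma prod_shift (x : ℝ) (k : ℕ) :
    ∏ i ∈ Finset.range (k+1), (x - i) = x * ∏ i ∈ Finset.range k, (x - 1 - i) := by
  rw [Finset.prod_range_succ']
  simp only [Nat.cast_zero, sub_zero, Nat.cast_add, Nat.cast_one]
  rw [mul_comm]
  congr 1
  exact Finset.prod_congr rfl fun i _ => by ring

lemma succ (x : ℝ) (k : ℕ) :
    gchoose x (k+1) = gchoose x k * (x - k) / (k+1) := by
  unfold gchoose
  rw [Finset.prod_range_succ, Nat.factorial_succ]
  push_cast
  rw [div_mul_eq_mul_div, div_div, mul_comm ((k:ℝ)+1)]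

lemma succ' (x : ℝ) (k : ℕ) :
    gchoose x (k+1) = x * gchoose (x-1) k / (k+1) := by
  unfold gchoose
  rw [prod_shift, Nat.factorial_succ]
  push_cast
  rw [mul_div_assoc, mul_div_assoc, div_div, mul_comm ((k:ℝ)+1)]

lemma zero (x : ℝ) : gchoose x 0 = 1 := by simp [gchoose]

lemma pascal (x : ℝ) (k : ℕ) :
    gchoose x (k+1) = gchoose (x-1) (k+1) + gchoose (x-1) k := by
  rw [succ' x k, succ (x-1) k]
  unfold gchoose
  have hk : ((k:ℝ)+1) ≠ 0 := by positivity
  have hf : ((k.factorial : ℝ)) ≠ 0 := by positivity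
  field_simp
  ring

lemma nonneg {x : ℝ} {k : ℕ} (h : (k:ℝ) - 1 ≤ x) : 0 ≤ gchoose x k := by
  unfold gchoose
  apply div_nonneg _ (by positivity)
  apply Finset.prod_nonneg
  intro i hi
  rw [Finset.mem_range] at hi
  have : (i:ℝ) ≤ (k:ℝ) - 1 := by
    have : (i:ℝ) + 1 ≤ (k:ℝ) := by exact_mod_cast hi
    linarith
  linarith

lemma pos {x : ℝ} {k : ℕ} (h : (k:ℝ) - 1 < x) : 0 < gchoose x k := by
  unfold gchoose
  apply div_pos _ (by positivity)
  apply Finset.prod_pos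
  intro i hi
  rw [Finset.mem_range] at hi
  have : (i:ℝ) + 1 ≤ (k:ℝ) := by exact_mod_cast hi
  linarith

lemma factor_nonneg {a : ℝ} {k i : ℕ} (ha : (k:ℝ) - 1 ≤ a) (hi : i ∈ Finset.range k) :
    0 ≤ a - i := by
  rw [Finset.mem_range] at hi
  have : (i:ℝ) + 1 ≤ (k:ℝ) := by exact_mod_cast hi
  linarith

lemma mono {a b : ℝ} {k : ℕ} (ha : (k:ℝ) - 1 ≤ a) (hab : a ≤ b) :
    gchoose a k ≤ gchoose b k := by
  unfold gchoose
  apply div_le_div_of_nonneg_right ?_ (by positivity)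
  apply Finset.prod_le_prod (fun i hi => factor_nonneg ha hi) (fun i _ => by linarith)

lemma strict_mono {a b : ℝ} {k : ℕ} (hk : 1 ≤ k) (ha : (k:ℝ) - 1 ≤ a) (hab : a < b) :
    gchoose a k < gchoose b k := by
  have hb : (k:ℝ) - 1 < b := lt_of_le_of_lt ha hab
  rcases eq_or_lt_of_le ha with he | hlt
  · have h0 : gchoose a k = 0 := by
      unfold gchoose
      have hm : (k-1) ∈ Finset.range k := by
        rw [Finset.mem_range]; omega
      rw [Finset.prod_eq_zero hm, zero_div]
      have hc : ((k-1 : ℕ) : ℝ) = (k:ℝ) - 1 := by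
        have h1 : (1:ℕ) ≤ k := hk
        push_cast [h1]
        ring
      rw [hc, ← he]; ring
    rw [h0]; exact pos hb
  · unfold gchoose
    apply div_lt_div_of_pos_right ?_ (by positivity)
    apply Finset.prod_lt_prod_of_nonempty
    · intro i hi
      rw [Finset.mem_range] at hi
      have : (i:ℝ) + 1 ≤ (k:ℝ) := by exact_mod_cast hi
      linarith
    · intro i _; linarith
    · exact Finset.nonempty_range_iff.2 (by omega)

lemma prod_eq_poch (x : ℝ) (k : ℕ) :
    ∏ i ∈ Finset.range k, (x - i) = (descPochhammer ℝ k).eval x := by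
  induction k with
  | zero => simp [descPochhammer]
  | succ k ih => rw [Finset.prod_range_succ, ih, descPochhammer_succ_eval]

/-- gchoose at natural number arguments agrees with Nat.choose -/
lemma nat_cast (m k : ℕ) : gchoose (m:ℝ) k = (m.choose k : ℝ) := by
  unfold gchoose
  rw [prod_eq_poch, descPochhammer_eval_eq_descFactorial,
    Nat.descFactorial_eq_factorial_mul_choose]
  push_cast
  rw [mul_comm, mul_div_assoc]
  have : (k.factorial : ℝ) ≠ 0 := by positivity
  field_simp

/-- existence of a real argument attaining any value ≥ 1 -/
lemma exists_arg {k : ℕ} (hk : 1 ≤ k) {d : ℝ} (hd : 1 ≤ d) :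
    ∃ z : ℝ, (k:ℝ) ≤ z ∧ gchoose z k = d := by
  have hcont : ContinuousOn (fun z => gchoose z k) (Set.Icc (k:ℝ) ((k:ℝ) + k.factorial * d)) := by
    apply Continuous.continuousOn
    unfold gchoose
    apply Continuous.div_const
    exact continuous_finset_prod _ (fun i _ => by continuity)
  have h1 : gchoose ((k:ℝ)) k = 1 := by
    rw [nat_cast]; simp
  have h2 : d ≤ gchoose ((k:ℝ) + k.factorial * d) k := by
    set b := (k:ℝ) + k.factorial * d with hb
    have hfac : (1:ℝ) ≤ k.factorial := by exact_mod_cast k.factorial_pos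
    have hbk : (k:ℝ) ≤ b := by nlinarith
    unfold gchoose
    rw [le_div_iff₀ (by positivity)]
    have hone : ∀ i ∈ Finset.range k, (1:ℝ) ≤ b - i := by
      intro i hi
      rw [Finset.mem_range] at hi
      have : (i:ℝ) + 1 ≤ (k:ℝ) := by exact_mod_cast hi
      nlinarith
    calc d * k.factorial ≤ b - ((k-1 : ℕ):ℝ) := by
          have h1 : (1:ℕ) ≤ k := hk
          have : ((k-1 : ℕ) : ℝ) = (k:ℝ) - 1 := by push_cast [h1]; ring
          rw [this, hb]; nlinarith
      _ ≤ ∏ i ∈ Finset.range k, (b - i) := by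
          obtain ⟨k', rfl⟩ : ∃ k', k = k' + 1 := ⟨k - 1, by omega⟩
          rw [Finset.prod_range_succ]
          have hsimp : (k' + 1 - 1 : ℕ) = k' := by omega
          rw [hsimp]
          have h1 : (1:ℝ) ≤ ∏ i ∈ Finset.range k', (b - i) := by
            calc (1:ℝ) = ∏ _i ∈ Finset.range k', (1:ℝ) := by simp
              _ ≤ _ := Finset.prod_le_prod (by intros; norm_num)
                  (fun i hi => hone i (by rw [Finset.mem_range] at *; omega))
          have h2 : (0:ℝ) ≤ b - k' := by
            have := hone k' (by rw [Finset.mem_range]; omega)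
            linarith
          nlinarith
  have := intermediate_value_Icc (le_trans (le_refl _) (by nlinarith [k.factorial_pos] : (k:ℝ) ≤ (k:ℝ) + k.factorial * d)) hcont
  have hmem : d ∈ Set.Icc (gchoose (k:ℝ) k) (gchoose ((k:ℝ) + k.factorial * d) k) := by
    rw [h1]; exact ⟨hd, h2⟩
  obtain ⟨z, hz, hz2⟩ := this hmem
  exact ⟨z, hz.1, hz2⟩

end gchoose

section KKaux

open Finset UV
open scoped FinsetFamily

variable {n : ℕ}

private def famMeasure (𝒜 : Finset (Finset (Fin n))) : ℕ := ∑ A ∈ 𝒜, ∑ a ∈ A, 2 ^ (a : ℕ)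

private lemma famMeasure_compression_lt {U V : Finset (Fin n)} {hU : U.Nonempty}
    {hV : V.Nonempty} (h : max' U hU < max' V hV) {𝒜 : Finset (Finset (Fin n))}
    (a : 𝓒 U V 𝒜 ≠ 𝒜) :
    famMeasure (𝓒 U V 𝒜) < famMeasure 𝒜 := by
  rw [UV.compression] at a ⊢
  have q : ∀ Q ∈ {A ∈ 𝒜 | UV.compress U V A ∉ 𝒜}, UV.compress U V Q ≠ Q := by
    simp_rw [mem_filter]
    intro Q hQ h
    rw [h] at hQ
    exact hQ.2 hQ.1
  have uA : {A ∈ 𝒜 | UV.compress U V A ∈ 𝒜} ∪ {A ∈ 𝒜 | UV.compress U V A ∉ 𝒜} = 𝒜 :=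
    filter_union_filter_not_eq _ _
  have ne₂ : {A ∈ 𝒜 | UV.compress U V A ∉ 𝒜}.Nonempty := by
    refine nonempty_iff_ne_empty.2 fun z ↦ a ?_
    rw [filter_image, z, image_empty, union_empty]
    rwa [z, union_empty] at uA
  rw [famMeasure, famMeasure, sum_union UV.compress_disjoint]
  conv_rhs => rw [← uA]
  rw [sum_union (disjoint_filter_filter_not _ _ _), add_lt_add_iff_left, filter_image,
    sum_image UV.compress_injOn]
  refine sum_lt_sum_of_nonempty ne₂ fun A hA ↦ ?_
  simp_rw [← sum_image Fin.val_injective.injOn]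
  rw [geomSum_lt_geomSum_iff_toColex_lt_toColex le_rfl,
    Finset.Colex.toColex_image_lt_toColex_image Fin.val_strictMono]
  exact Finset.UV.toColex_compress_lt_toColex h <| q _ hA

/-- Compress a sized family along all singleton compressions. -/
private lemma exists_singleton_compressed {r : ℕ} (𝒜 : Finset (Finset (Fin n)))
    (h : (𝒜 : Set (Finset (Fin n))).Sized r) :
    ∃ ℬ : Finset (Finset (Fin n)), #(∂ ℬ) ≤ #(∂ 𝒜) ∧ #𝒜 = #ℬ ∧
      (ℬ : Set (Finset (Fin n))).Sized r ∧
      ∀ w u : Fin n, w < u → UV.IsCompressed {w} {u} ℬ := by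
  classical
  set usable : Finset (Fin n × Fin n) :=
    {t | t.1 < t.2 ∧ ¬ UV.IsCompressed {t.1} {t.2} 𝒜} with husable_def
  obtain husable | husable := usable.eq_empty_or_nonempty
  · refine ⟨𝒜, le_rfl, rfl, h, fun w u hwu ↦ ?_⟩
    rw [eq_empty_iff_forall_notMem] at husable
    by_contra hcomp
    exact husable ⟨w, u⟩ <| by simp [husable_def, hwu, hcomp]
  obtain ⟨⟨w, u⟩, hmem⟩ := husable
  have hmem' : w < u ∧ ¬ UV.IsCompressed {w} {u} 𝒜 := by
    simpa [husable_def] using hmem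
  have hsh : #(∂ (𝓒 {w} {u} 𝒜)) ≤ #(∂ 𝒜) := by
    apply UV.card_shadow_compression_le
    intro x hx
    refine ⟨u, mem_singleton_self u, ?_⟩
    rw [mem_singleton] at hx
    subst hx
    rw [erase_singleton, erase_singleton]
    exact UV.isCompressed_self _ _
  have hmax : ({w} : Finset (Fin n)).max' ⟨w, mem_singleton_self w⟩ <
      ({u} : Finset (Fin n)).max' ⟨u, mem_singleton_self u⟩ := by
    rw [max'_singleton, max'_singleton]; exact hmem'.1
  have hdec := famMeasure_compression_lt hmax hmem'.2
  obtain ⟨ℬ, q1, q2, q3, q4⟩ := exists_singleton_compressed (𝓒 {w} {u} 𝒜)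
    (h.uvCompression (by simp))
  exact ⟨ℬ, q1.trans hsh, (UV.card_compression _ _ _).symm.trans q2, q3, q4⟩
termination_by famMeasure 𝒜

end KKaux

section Lovasz

open Finset
open scoped FinsetFamily


theorem lovasz_fin {n : ℕ} : ∀ (k : ℕ) (N : ℕ) (A : Finset (Finset (Fin n))), A.card = N →
    (A : Set (Finset (Fin n))).Sized (k+1) → ∀ z : ℝ, ((k:ℝ)+1) ≤ z →
    gchoose z (k+1) ≤ (A.card : ℝ) → gchoose z k ≤ (((∂ A) : Finset (Finset (Fin n))).card : ℝ) := by
  intro k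
  induction k with
  | zero =>
    intro N A _ hA z hz hle
    rw [gchoose.zero]
    have h1 : gchoose z 1 = z := by
      unfold gchoose; simp
    rw [h1] at hle
    have hAne : A.Nonempty := by
      rw [← Finset.card_pos]
      by_contra hc
      push_neg at hc
      interval_cases h : A.card
      · simp_all
        linarith
    obtain ⟨t, ht⟩ := hAne
    have htc : t.card = 1 := hA (Finset.mem_coe.2 ht)
    obtain ⟨a, rfl⟩ := Finset.card_eq_one.1 htc
    have hmem : ∅ ∈ ∂ A := by
      rw [Finset.mem_shadow_iff]
      exact ⟨{a}, ht, a, Finset.mem_singleton_self a, Finset.erase_singleton a⟩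
    have : 1 ≤ (∂ A).card := Finset.card_pos.2 ⟨∅, hmem⟩
    exact_mod_cast this
  | succ k ih =>
    intro N
    induction N using Nat.strong_induction_on with
    | _ N ihN =>
    intro A hAN hA z hz hle
    push_cast at hz
    obtain ⟨B, hBsh, hBcard, hBsized, hBcomp⟩ := exists_singleton_compressed A hA
    have hone : (1:ℝ) ≤ (A.card : ℝ) := by
      refine le_trans ?_ hle
      have := gchoose.nat_cast (k+2) (k+2)
      have h2 : gchoose ((k:ℝ)+2) (k+2) = 1 := by
        push_cast at this
        rw [this, Nat.choose_self]
        norm_num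
      calc (1:ℝ) = gchoose ((k:ℝ)+2) (k+2) := h2.symm
        _ ≤ gchoose z (k+2) := gchoose.mono (by push_cast; linarith) (by linarith)
    have hBne : B.Nonempty := by
      rw [← Finset.card_pos, ← hBcard]
      exact_mod_cast lt_of_lt_of_le zero_lt_one hone
    obtain ⟨e₀, he₀⟩ := hBne
    have he₀c : e₀.card = k + 1 + 1 := hBsized (Finset.mem_coe.2 he₀)
    have he₀ne : e₀.Nonempty := Finset.card_pos.1 (by omega)
    have hn : 0 < n := he₀ne.choose.pos
    set z0 : Fin n := ⟨0, hn⟩ with hz0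
    -- the shift property
    have hshift : ∀ e ∈ B, z0 ∉ e → ∀ u ∈ e, insert z0 (e.erase u) ∈ B := by
      intro e he h0 u hu
      have hlt : z0 < u := by
        refine lt_of_le_of_ne ?_ (Ne.symm (ne_of_mem_of_not_mem hu h0))
        exact Fin.mk_le_of_le_val (Nat.zero_le _)
      have hc := hBcomp z0 u hlt
      have hmem := UV.compress_mem_compression (u := ({z0} : Finset (Fin n)))
        (v := ({u} : Finset (Fin n))) he
      rw [hc.eq] at hmem
      have hcomp_eq : UV.compress ({z0} : Finset (Fin n)) {u} e = insert z0 (e.erase u) := by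
        rw [UV.compress, if_pos]
        · ext x
          simp only [Finset.mem_sdiff, Finset.sup_eq_union, Finset.mem_union,
            Finset.mem_singleton, Finset.mem_insert, Finset.mem_erase]
          constructor
          · rintro ⟨h1 | h1, h2⟩
            · right; exact ⟨h2, h1⟩
            · left; exact h1
          · rintro (rfl | ⟨h1, h2⟩)
            · exact ⟨Or.inr rfl, fun hc => h0 (hc ▸ hu)⟩
            · exact ⟨Or.inl h2, h1⟩
        · refine ⟨?_, Finset.singleton_subset_iff.2 hu⟩
          simp only [Finset.disjoint_singleton_left]
          exact h0
      rwa [hcomp_eq] at hmem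
    set B0 : Finset (Finset (Fin n)) :=
      (B.filter (fun e => z0 ∈ e)).image (fun e => e.erase z0) with hB0def
    set Bc : Finset (Finset (Fin n)) := B.filter (fun e => z0 ∉ e) with hBcdef
    have hinjfilter : Set.InjOn (fun e => Finset.erase e z0) ↑(B.filter (fun e => z0 ∈ e)) := by
      intro e1 h1 e2 h2 hee
      simp only [Finset.coe_filter, Set.mem_setOf_eq] at h1 h2
      rw [← Finset.insert_erase h1.2, ← Finset.insert_erase h2.2]
      simp only at hee
      rw [hee]
    have hB0card : B0.card = (B.filter (fun e => z0 ∈ e)).card :=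
      Finset.card_image_of_injOn hinjfilter
    have hsplit : B0.card + Bc.card = B.card := by
      rw [hB0card, hBcdef]
      exact Finset.card_filter_add_card_filter_not _
    have hB0sized : (B0 : Set (Finset (Fin n))).Sized (k+1) := by
      intro t ht
      rw [Finset.mem_coe, hB0def, Finset.mem_image] at ht
      obtain ⟨e, he, rfl⟩ := ht
      rw [Finset.mem_filter] at he
      rw [Finset.card_erase_of_mem he.2, hBsized (Finset.mem_coe.2 he.1)]
      omega
    have hBcsized : (Bc : Set (Finset (Fin n))).Sized (k+1+1) := by
      intro t ht
      rw [Finset.mem_coe, hBcdef, Finset.mem_filter] at ht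
      exact hBsized (Finset.mem_coe.2 ht.1)
    have hlink : ∂ Bc ⊆ B0 := by
      intro s hs
      rw [Finset.mem_shadow_iff] at hs
      obtain ⟨e, he, a, ha, rfl⟩ := hs
      rw [hBcdef, Finset.mem_filter] at he
      have hins := hshift e he.1 he.2 a ha
      rw [hB0def, Finset.mem_image]
      refine ⟨insert z0 (e.erase a), Finset.mem_filter.2 ⟨hins, Finset.mem_insert_self _ _⟩, ?_⟩
      rw [Finset.erase_insert]
      intro hc
      exact he.2 (Finset.mem_of_mem_erase hc)
    have hB0shadow : B0 ⊆ ∂ B := by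
      intro t ht
      rw [hB0def, Finset.mem_image] at ht
      obtain ⟨e, he, rfl⟩ := ht
      rw [Finset.mem_filter] at he
      rw [Finset.mem_shadow_iff]
      exact ⟨e, he.1, z0, he.2, rfl⟩
    have hz0notmemB0 : ∀ t ∈ B0, z0 ∉ t := by
      intro t ht
      rw [hB0def, Finset.mem_image] at ht
      obtain ⟨e, _, rfl⟩ := ht
      exact Finset.notMem_erase _ _
    have hz0notmemSB0 : ∀ f ∈ ∂ B0, z0 ∉ f := by
      intro f hf
      rw [Finset.mem_shadow_iff] at hf
      obtain ⟨t, ht, a, _, rfl⟩ := hf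
      intro hc
      exact hz0notmemB0 t ht (Finset.mem_of_mem_erase hc)
    have hinsert : (∂ B0).image (insert z0) ⊆ ∂ B := by
      intro s hs
      rw [Finset.mem_image] at hs
      obtain ⟨f, hf, rfl⟩ := hs
      have hz0f : z0 ∉ f := hz0notmemSB0 f hf
      rw [Finset.mem_shadow_iff] at hf
      obtain ⟨t, ht, a, ha, rfl⟩ := hf
      rw [hB0def, Finset.mem_image] at ht
      obtain ⟨e, he, rfl⟩ := ht
      rw [Finset.mem_filter] at he
      have haz : a ≠ z0 := Finset.ne_of_mem_erase ha
      have h1 : insert z0 ((e.erase z0).erase a) = e.erase a := by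
        rw [Finset.erase_right_comm]
        exact Finset.insert_erase (Finset.mem_erase.2 ⟨Ne.symm haz, he.2⟩)
      rw [h1, Finset.mem_shadow_iff]
      exact ⟨e, he.1, a, Finset.mem_of_mem_erase ha, rfl⟩
    have hdisj : Disjoint B0 ((∂ B0).image (insert z0)) := by
      rw [Finset.disjoint_left]
      intro t ht hc
      rw [Finset.mem_image] at hc
      obtain ⟨f, _, rfl⟩ := hc
      exact hz0notmemB0 _ ht (Finset.mem_insert_self _ _)
    have hcard_ins : ((∂ B0).image (insert z0)).card = (∂ B0).card := by
      apply Finset.card_image_of_injOn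
      intro f1 h1 f2 h2 hee
      have hn1 : z0 ∉ f1 := hz0notmemSB0 f1 h1
      have hn2 : z0 ∉ f2 := hz0notmemSB0 f2 h2
      have := congrArg (fun s => Finset.erase s z0) hee
      simpa [Finset.erase_insert hn1, Finset.erase_insert hn2] using this
    have hshadowB : B0.card + (∂ B0).card ≤ (∂ B).card := by
      have hsub : B0 ∪ (∂ B0).image (insert z0) ⊆ ∂ B := Finset.union_subset hB0shadow hinsert
      have := Finset.card_le_card hsub
      rwa [Finset.card_union_of_disjoint hdisj, hcard_ins] at this
    -- key claim
    have hclaim : gchoose (z-1) (k+1) ≤ (B0.card : ℝ) := by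
      by_contra hsm
      push_neg at hsm
      have hpascal : gchoose z (k+2) = gchoose (z-1) (k+2) + gchoose (z-1) (k+1) :=
        gchoose.pascal z (k+1)
      have hABcast : (A.card : ℝ) = (B.card : ℝ) := by exact_mod_cast hBcard
      rcases Bc.eq_empty_or_nonempty with hBc | hBc
      · have hB0B : (B0.card:ℝ) = (B.card:ℝ) := by
          rw [← hsplit, hBc]; simp
        have h2 : gchoose (z-1) (k+1) ≤ gchoose z (k+2) := by
          have h3 : 0 ≤ gchoose (z-1) (k+2) := gchoose.nonneg (by push_cast; linarith)
          rw [hpascal]; linarith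
        have : gchoose z (k+2) ≤ (B0.card : ℝ) := by
          rw [hB0B, ← hABcast]; exact_mod_cast hle
        linarith
      · obtain ⟨e, he⟩ := hBc
        have heB : e ∈ B ∧ z0 ∉ e := Finset.mem_filter.1 (hBcdef ▸ he)
        have hec : e.card = k + 1 + 1 := hBcsized (Finset.mem_coe.2 he)
        have hcardB0 : k+2 ≤ B0.card := by
          have himg : e.image (fun u => e.erase u) ⊆ B0 := by
            intro s hs
            rw [Finset.mem_image] at hs
            obtain ⟨u, hu, rfl⟩ := hs
            apply hlink
            rw [Finset.mem_shadow_iff]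
            exact ⟨e, he, u, hu, rfl⟩
          have hinj : Set.InjOn (fun u => e.erase u) ↑e := by
            intro u1 h1 u2 h2 hee
            by_contra hne
            have h3 : u1 ∈ e.erase u2 := Finset.mem_erase.2 ⟨hne, h1⟩
            simp only at hee
            rw [← hee] at h3
            exact Finset.notMem_erase _ _ h3
          have := Finset.card_le_card himg
          rwa [Finset.card_image_of_injOn hinj, hec] at this
        rcases le_or_gt z ((k:ℝ)+3) with hz3 | hz3
        · have h1 : gchoose (z-1) (k+1) ≤ gchoose ((k:ℝ)+2) (k+1) :=
            gchoose.mono (by push_cast; linarith) (by linarith)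
          have h2 : gchoose ((k:ℝ)+2) (k+1) = ((k:ℝ)+2) := by
            have h3 := gchoose.nat_cast (k+2) (k+1)
            push_cast at h3
            rw [h3, Nat.choose_succ_self_right]
            push_cast
            ring
          have h4 : ((k:ℝ)+2) ≤ (B0.card : ℝ) := by exact_mod_cast hcardB0
          linarith
        · have hB0ne : 1 ≤ B0.card := by omega
          have hBclt : Bc.card < N := by
            have : B.card = N := by rw [← hAN]; omega
            omega
          have hBcge : gchoose (z-1) (k+2) ≤ (Bc.card:ℝ) := by
            have hsplitR : (B0.card:ℝ) + (Bc.card:ℝ) = (B.card:ℝ) := by exact_mod_cast hsplit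
            have : gchoose z (k+2) ≤ (B.card : ℝ) := by rw [← hABcast]; exact_mod_cast hle
            linarith
          have hrec := ihN Bc.card hBclt Bc rfl hBcsized (z-1) (by push_cast; linarith) hBcge
          have hle2 : (((∂ Bc).card) : ℝ) ≤ (B0.card : ℝ) := by
            exact_mod_cast Finset.card_le_card hlink
          linarith
    -- apply induction at level k to B0
    have hih := ih B0.card B0 rfl hB0sized (z-1) (by push_cast; linarith) hclaim
    have hpascal2 : gchoose z (k+1) = gchoose (z-1) (k+1) + gchoose (z-1) k := gchoose.pascal z k
    have hc1 : ((∂ B).card : ℝ) ≤ ((∂ A).card : ℝ) := by exact_mod_cast hBsh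
    have hc2 : (B0.card : ℝ) + ((∂ B0).card : ℝ) ≤ ((∂ B).card : ℝ) := by exact_mod_cast hshadowB
    linarith

end Lovasz

section Transfer

open Finset
open scoped FinsetFamily

theorem lovasz_gen {V : Type*} [Fintype V] [DecidableEq V] (k : ℕ) (A : Finset (Finset V))
    (hA : (A : Set (Finset V)).Sized (k+1)) (z : ℝ) (hz : ((k:ℝ)+1) ≤ z)
    (hle : gchoose z (k+1) ≤ (A.card : ℝ)) : gchoose z k ≤ ((∂ A).card : ℝ) := by
  classical
  set n := Fintype.card V
  set e : V ≃ Fin n := Fintype.equivFin V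
  set Φ : Finset V → Finset (Fin n) := fun s => s.map e.toEmbedding with hΦ
  have hΦinj : Function.Injective Φ := Finset.map_injective _
  set A' : Finset (Finset (Fin n)) := A.image Φ with hA'
  have hcardA : A'.card = A.card := Finset.card_image_of_injective _ hΦinj
  have hsizedA : (A' : Set (Finset (Fin n))).Sized (k+1) := by
    intro t ht
    rw [Finset.mem_coe, hA', Finset.mem_image] at ht
    obtain ⟨s, hs, rfl⟩ := ht
    rw [hΦ, Finset.card_map]
    exact hA (Finset.mem_coe.2 hs)
  have hshadow : ∂ A' = (∂ A).image Φ := by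
    ext t
    rw [Finset.mem_shadow_iff, Finset.mem_image]
    constructor
    · rintro ⟨T, hT, b, hb, rfl⟩
      rw [hA', Finset.mem_image] at hT
      obtain ⟨s, hs, rfl⟩ := hT
      rw [hΦ] at hb
      simp only [Finset.mem_map] at hb
      obtain ⟨a, ha, rfl⟩ := hb
      refine ⟨s.erase a, ?_, ?_⟩
      · rw [Finset.mem_shadow_iff]; exact ⟨s, hs, a, ha, rfl⟩
      · rw [hΦ]; exact (Finset.map_erase _ _ _)
    · rintro ⟨f, hf, rfl⟩
      rw [Finset.mem_shadow_iff] at hf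
      obtain ⟨s, hs, a, ha, rfl⟩ := hf
      refine ⟨Φ s, Finset.mem_image_of_mem _ hs, e.toEmbedding a, ?_, ?_⟩
      · rw [hΦ]; exact Finset.mem_map_of_mem _ ha
      · rw [hΦ]; exact (Finset.map_erase _ _ _).symm
  have hcardsh : (∂ A').card = (∂ A).card := by
    rw [hshadow]; exact Finset.card_image_of_injective _ hΦinj
  have := lovasz_fin k A'.card A' rfl hsizedA z hz (by rw [hcardA]; exact hle)
  rwa [hcardsh] at this

/-- The Lovász Kruskal–Katona bound in "clique count" form. -/
theorem clique_bound {V : Type*} [Fintype V] [DecidableEq V] (k : ℕ) (hk : 1 ≤ k)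
    (F : Finset (Finset V)) (hF : (F : Set (Finset V)).Sized (k+1)) (c : ℝ)
    (hc : (k:ℝ) ≤ c) (hsh : ((∂ F).card : ℝ) ≤ gchoose c k) :
    (F.card : ℝ) ≤ gchoose c (k+1) := by
  by_contra h
  push_neg at h
  have h0 : 0 ≤ gchoose c (k+1) := gchoose.nonneg (by push_cast; linarith)
  have h1 : (1:ℝ) ≤ (F.card : ℝ) := by
    have : 0 < F.card := by exact_mod_cast lt_of_le_of_lt h0 h
    exact_mod_cast this
  obtain ⟨z, hz1, hz2⟩ := gchoose.exists_arg (k := k+1) (by omega) h1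
  push_cast at hz1
  have hlov := lovasz_gen k F hF z hz1 (le_of_eq hz2)
  have hzc : c < z := by
    by_contra hle'
    push_neg at hle'
    have := gchoose.mono (k := k+1) (by push_cast; linarith) hle'
    rw [hz2] at this
    linarith
  have hmono : gchoose c k < gchoose z k :=
    gchoose.strict_mono hk (by push_cast; linarith) hzc
  linarith

end Transfer

section Main

open Finset
open scoped FinsetFamily

lemma sum_card_filter_mem {V : Type*} [Fintype V] [DecidableEq V] (S : Finset (Finset V)) (c : ℕ)
    (hS : ∀ T ∈ S, T.card = c) :
    ∑ v : V, (S.filter (fun T => v ∈ T)).card = c * S.card := by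
  have h1 : ∀ v : V, (S.filter (fun T => v ∈ T)).card = ∑ T ∈ S, if v ∈ T then 1 else 0 :=
    fun v => Finset.card_filter _ _
  simp_rw [h1]
  rw [Finset.sum_comm]
  have h2 : ∀ T ∈ S, (∑ v : V, if v ∈ T then 1 else 0) = c := by
    intro T hT
    rw [← Finset.card_filter]
    rw [Finset.filter_univ_mem]
    exact hS T hT
  rw [Finset.sum_congr rfl h2, Finset.sum_const, smul_eq_mul, mul_comm]

set_option maxHeartbeats 3200000 in
/-- Quantitative stability for the Kruskal–Katona theorem, part (3): the sum of the
degrees of the vertices of degree less than `C((1-δ^{1/2})(x-1), r-1)` is at most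
`δ^{1/2}·x·C(x-1,r-1)`. -/
theorem stmt8 {V : Type*} [Fintype V] [DecidableEq V] (ε : ℝ) (hε0 : 0 < ε)
    (hε1 : ε < 1 / 2) (r : ℕ) (hr : 2 ≤ r) (x : ℝ) (hx : (1 + ε) * (r + 1) ≤ x)
    (δ : ℝ) (hδ0 : 0 < δ) (hδ : δ < (ε / (6 * r)) ^ 2)
    (G : Finset (Finset V)) (hG : ∀ e ∈ G, e.card = r)
    (hcard : (G.card : ℝ) = gchoose x r)
    (hK : (1 - δ) * gchoose x (r + 1) < (cliqueCount r G (r + 1) : ℝ)) :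
    (∑ v ∈ ((Finset.univ : Finset V).filter fun v =>
        (deg G v : ℝ) < gchoose ((1 - Real.sqrt δ) * (x - 1)) (r - 1)),
      (deg G v : ℝ)) ≤ Real.sqrt δ * x * gchoose (x - 1) (r - 1) := by
  classical
  obtain ⟨m, rfl⟩ : ∃ m, r = m + 2 := ⟨r - 2, by omega⟩
  have hm1 : ((m:ℝ) + 2) = (((m+2 : ℕ)):ℝ) := by push_cast; ring
  -- basic positivity facts
  have hrpos : (0:ℝ) < (m:ℝ) + 2 := by positivity
  have hxgt : ((m:ℝ) + 3) < x := by
    have hc : ((m+2:ℕ):ℝ) = (m:ℝ)+2 := by push_cast; ring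
    rw [hc] at hx
    nlinarith
  have hx1 : (0:ℝ) < x - 1 := by linarith
  have hxr : (0:ℝ) < x - ((m:ℝ)+2) := by linarith
  have hsd_pos : 0 < Real.sqrt δ := Real.sqrt_pos.2 hδ0
  have hsd_lt : Real.sqrt δ < ε / (6 * ((m:ℝ)+2)) := by
    have h6 : (0:ℝ) < ε / (6 * ((m:ℝ)+2)) := by positivity
    rw [Real.sqrt_lt' h6]
    have hc : ((m+2:ℕ):ℝ) = (m:ℝ)+2 := by push_cast; ring
    rw [hc] at hδ
    exact hδ
  -- √δ (x-1) ≤ x - r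
  have hkey : Real.sqrt δ * (x - 1) ≤ x - ((m:ℝ)+2) := by
    have h6 : ε * (x - 1) ≤ 6 * ((m:ℝ)+2) * (x - ((m:ℝ)+2)) := by
      have hc : ((m+2:ℕ):ℝ) = (m:ℝ)+2 := by push_cast; ring
      rw [hc] at hx
      nlinarith [hε0.le, hε1, sq_nonneg ε, sq_nonneg ((m:ℝ)+2)]
    have h7 : Real.sqrt δ * (x-1) ≤ (ε / (6 * ((m:ℝ)+2))) * (x-1) :=
      mul_le_mul_of_nonneg_right hsd_lt.le hx1.le
    have h8 : (ε / (6 * ((m:ℝ)+2))) * (x-1) ≤ x - ((m:ℝ)+2) := by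
      rw [div_mul_eq_mul_div, div_le_iff₀ (by positivity)]
      nlinarith [h6]
    linarith
  set c1 : ℝ := (1 - Real.sqrt δ) * (x-1) with hc1def
  have hc1id : c1 - ((m:ℝ)+1) = (x - ((m:ℝ)+2)) - Real.sqrt δ * (x-1) := by
    rw [hc1def]; ring
  have hc1ge : ((m:ℝ)+1) ≤ c1 := by linarith
  -- the clique family
  set K : Finset (Finset V) := (Finset.powersetCard (m+2+1) (Finset.univ : Finset V)).filter
    (fun T => ∀ S ∈ Finset.powersetCard (m+2) T, S ∈ G) with hKdef
  have hKcount : cliqueCount (m+2) G (m+2+1) = K.card := rfl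
  have hKcard : ∀ T ∈ K, T.card = m+3 := by
    intro T hT
    exact (Finset.mem_powersetCard.1 (Finset.mem_filter.1 hT).1).2
  have hKedge : ∀ T ∈ K, ∀ u ∈ T, T.erase u ∈ G := by
    intro T hT u hu
    apply (Finset.mem_filter.1 hT).2
    rw [Finset.mem_powersetCard]
    refine ⟨Finset.erase_subset _ _, ?_⟩
    rw [Finset.card_erase_of_mem hu, hKcard T hT]
    omega
  have hKsized : ∀ T ∈ K, T.card = m+2+1 := hKcard
  set nv : V → ℕ := fun v => (K.filter (fun T => v ∈ T)).card with hnvdef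
  -- double counting
  have hdegsum : ∑ v : V, (deg G v : ℝ) = ((m:ℝ)+2) * (G.card : ℝ) := by
    have := sum_card_filter_mem G (m+2) hG
    have h2 : ∑ v : V, deg G v = (m+2) * G.card := this
    calc ∑ v : V, (deg G v : ℝ) = ((∑ v : V, deg G v : ℕ) : ℝ) := by push_cast; ring
      _ = (((m+2) * G.card : ℕ) : ℝ) := by rw [h2]
      _ = ((m:ℝ)+2) * (G.card : ℝ) := by push_cast; ring
  have hnvsum : ∑ v : V, (nv v : ℝ) = ((m:ℝ)+3) * (K.card : ℝ) := by
    have h2 : ∑ v : V, nv v = (m+3) * K.card := sum_card_filter_mem K (m+3) hKcard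
    calc ∑ v : V, (nv v : ℝ) = ((∑ v : V, nv v : ℕ) : ℝ) := by push_cast; ring
      _ = (((m+3) * K.card : ℕ) : ℝ) := by rw [h2]
      _ = ((m:ℝ)+3) * (K.card : ℝ) := by push_cast; ring
  -- constants for per-vertex bound
  set c2 : ℝ := (x - ((m:ℝ)+2)) / ((m:ℝ)+2) with hc2def
  set c3 : ℝ := (Real.sqrt δ * (x-1)) / ((m:ℝ)+2) with hc3def
  have hc3pos : 0 < c3 := by rw [hc3def]; positivity
  -- the per-vertex bound
  have hmain : ∀ v : V, (nv v : ℝ) ≤ (deg G v : ℝ) * c2 -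
      (if (deg G v : ℝ) < gchoose c1 (m+1) then (deg G v : ℝ) * c3 else 0) := by
    intro v
    -- the link of v in the clique hypergraph
    set F : Finset (Finset V) := (K.filter (fun T => v ∈ T)).image (fun T => T.erase v) with hFdef
    have hFcard : F.card = nv v := by
      rw [hFdef, hnvdef]
      apply Finset.card_image_of_injOn
      intro T1 h1 T2 h2 hT
      simp only [Finset.coe_filter, Set.mem_setOf_eq] at h1 h2
      rw [← Finset.insert_erase h1.2, ← Finset.insert_erase h2.2]
      simp only at hT
      rw [hT]
    have hFsized : (F : Set (Finset V)).Sized (m+1+1) := by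
      intro t ht
      rw [Finset.mem_coe, hFdef, Finset.mem_image] at ht
      obtain ⟨T, hT, rfl⟩ := ht
      rw [Finset.mem_filter] at hT
      rw [Finset.card_erase_of_mem hT.2, hKcard T hT.1]
      omega
    set L : Finset (Finset V) := (G.filter (fun e => v ∈ e)).image (fun e => e.erase v) with hLdef
    have hLcard : L.card = deg G v := by
      rw [hLdef, deg]
      apply Finset.card_image_of_injOn
      intro e1 h1 e2 h2 he
      simp only [Finset.coe_filter, Set.mem_setOf_eq] at h1 h2
      rw [← Finset.insert_erase h1.2, ← Finset.insert_erase h2.2]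
      simp only at he
      rw [he]
    have hFsh : ∂ F ⊆ L := by
      intro s hs
      rw [Finset.mem_shadow_iff] at hs
      obtain ⟨t, ht, u, hu, rfl⟩ := hs
      rw [hFdef, Finset.mem_image] at ht
      obtain ⟨T, hT, rfl⟩ := ht
      rw [Finset.mem_filter] at hT
      have hune : u ≠ v := Finset.ne_of_mem_erase hu
      have hTu : T.erase u ∈ G := hKedge T hT.1 u (Finset.mem_of_mem_erase hu)
      rw [hLdef, Finset.mem_image]
      refine ⟨T.erase u, Finset.mem_filter.2 ⟨hTu, Finset.mem_erase.2 ⟨Ne.symm hune, hT.2⟩⟩, ?_⟩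
      rw [Finset.erase_right_comm]
    have hshle : ((∂ F).card : ℝ) ≤ (deg G v : ℝ) := by
      have := Finset.card_le_card hFsh
      rw [hLcard] at this
      exact_mod_cast this
    rcases Nat.eq_zero_or_pos (deg G v) with hd0 | hdpos
    · -- zero degree: no cliques through v
      have hnv0 : nv v = 0 := by
        rw [hnvdef, Finset.card_eq_zero, Finset.filter_eq_empty_iff]
        intro T hT hv
        have hTc : 1 < T.card := by rw [hKcard T hT]; omega
        obtain ⟨u, hu, hune⟩ := Finset.exists_mem_ne hTc v
        have hTu := hKedge T hT u hu
        have hvTu : v ∈ T.erase u := Finset.mem_erase.2 ⟨Ne.symm hune, hv⟩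
        have : 0 < deg G v := Finset.card_pos.2 ⟨T.erase u, Finset.mem_filter.2 ⟨hTu, hvTu⟩⟩
        omega
      rw [hnv0, hd0]
      push_cast
      split_ifs <;> norm_num
    · have hd1 : (1:ℝ) ≤ (deg G v : ℝ) := by exact_mod_cast hdpos
      obtain ⟨y, hy1, hy2⟩ := gchoose.exists_arg (k := m+1) (by omega) hd1
      push_cast at hy1
      have hclique : (nv v : ℝ) ≤ gchoose y (m+1+1) := by
        rw [← hFcard]
        exact_mod_cast clique_bound (m+1) (by omega) F hFsized y (by push_cast; linarith)
          (by rw [hy2]; exact hshle)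
      have hform : gchoose y (m+1+1) = (deg G v : ℝ) * (y - ((m:ℝ)+1)) / ((m:ℝ)+2) := by
        rw [gchoose.succ y (m+1), hy2]
        push_cast
        ring
      by_cases hsmall : (deg G v : ℝ) < gchoose c1 (m+1)
      · rw [if_pos hsmall]
        have hyc : y ≤ c1 := by
          by_contra hyc
          push_neg at hyc
          have := gchoose.mono (k := m+1) (by push_cast; linarith) hyc.le
          rw [hy2] at this
          linarith
        have h1 : (deg G v : ℝ) * (y - ((m:ℝ)+1)) ≤ (deg G v : ℝ) * (c1 - ((m:ℝ)+1)) :=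
          mul_le_mul_of_nonneg_left (by linarith) (by positivity)
        have h2 : (nv v : ℝ) ≤ (deg G v : ℝ) * (c1 - ((m:ℝ)+1)) / ((m:ℝ)+2) := by
          rw [hform] at hclique
          calc (nv v : ℝ) ≤ (deg G v : ℝ) * (y - ((m:ℝ)+1)) / ((m:ℝ)+2) := hclique
            _ ≤ _ := by apply div_le_div_of_nonneg_right h1 hrpos.le
        calc (nv v : ℝ) ≤ (deg G v : ℝ) * (c1 - ((m:ℝ)+1)) / ((m:ℝ)+2) := h2
          _ = (deg G v : ℝ) * c2 - (deg G v : ℝ) * c3 := by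
              rw [hc2def, hc3def, hc1id]; field_simp
      · rw [if_neg hsmall]
        rw [sub_zero]
        push_neg at hsmall
        rcases le_or_gt ((deg G v : ℝ)) (gchoose (x-1) (m+1)) with hmed | hlarge
        · have hyx : y ≤ x - 1 := by
            by_contra hyx
            push_neg at hyx
            have := gchoose.strict_mono (k := m+1) (by omega) (by push_cast; linarith) hyx
            rw [hy2] at this
            linarith
          have h1 : (deg G v : ℝ) * (y - ((m:ℝ)+1)) ≤ (deg G v : ℝ) * (x - ((m:ℝ)+2)) :=
            mul_le_mul_of_nonneg_left (by linarith) (by positivity)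
          rw [hform] at hclique
          calc (nv v : ℝ) ≤ (deg G v : ℝ) * (y - ((m:ℝ)+1)) / ((m:ℝ)+2) := hclique
            _ ≤ (deg G v : ℝ) * (x - ((m:ℝ)+2)) / ((m:ℝ)+2) := by
                apply div_le_div_of_nonneg_right h1 hrpos.le
            _ = (deg G v : ℝ) * c2 := by rw [hc2def]; ring
        · -- large degree: cliques through v are at most the edges missing v
          have hinj : nv v ≤ (G.filter (fun e => ¬ v ∈ e)).card := by
            rw [hnvdef]
            apply Finset.card_le_card_of_injOn (fun T => T.erase v)
            · intro T hT
              rw [Finset.mem_coe, Finset.mem_filter] at hT ⊢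
              exact ⟨hKedge T hT.1 v hT.2, Finset.notMem_erase _ _⟩
            · intro T1 h1 T2 h2 hT
              simp only [Finset.coe_filter, Set.mem_setOf_eq] at h1 h2
              rw [← Finset.insert_erase h1.2, ← Finset.insert_erase h2.2]
              simp only at hT
              rw [hT]
          have hsplit2 : deg G v + (G.filter (fun e => ¬ v ∈ e)).card = G.card :=
            Finset.card_filter_add_card_filter_not (p := fun e => v ∈ e)
          have hnvle : (nv v : ℝ) ≤ (G.card : ℝ) - (deg G v : ℝ) := by
            have h3 : (nv v : ℝ) ≤ ((G.filter (fun e => ¬ v ∈ e)).card : ℝ) := by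
              exact_mod_cast hinj
            have h4 : ((G.filter (fun e => ¬ v ∈ e)).card : ℝ) = (G.card : ℝ) - (deg G v : ℝ) := by
              have := hsplit2
              push_cast [← this]
              ring
            linarith
          have hp : gchoose x (m+1+1) = gchoose (x-1) (m+1+1) + gchoose (x-1) (m+1) :=
            gchoose.pascal x (m+1)
          have hq : gchoose (x-1) (m+1+1) = gchoose (x-1) (m+1) * ((x-1) - ((m:ℝ)+1)) / ((m:ℝ)+2) := by
            rw [gchoose.succ (x-1) (m+1)]
            push_cast
            ring
          have hg1 : 0 ≤ gchoose (x-1) (m+1) := gchoose.nonneg (by push_cast; linarith)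
          have h5 : gchoose (x-1) (m+1) * ((x-1) - ((m:ℝ)+1)) ≤
              (deg G v : ℝ) * (x - ((m:ℝ)+2)) := by
            have : (x-1) - ((m:ℝ)+1) = x - ((m:ℝ)+2) := by ring
            rw [this]
            exact mul_le_mul_of_nonneg_right hlarge.le hxr.le
          have h6 : gchoose (x-1) (m+1+1) ≤ (deg G v : ℝ) * (x - ((m:ℝ)+2)) / ((m:ℝ)+2) := by
            rw [hq]
            apply div_le_div_of_nonneg_right h5 hrpos.le
          have h7 : (nv v : ℝ) ≤ gchoose (x-1) (m+1+1) := by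
            rw [hcard, hp] at hnvle
            linarith
          calc (nv v : ℝ) ≤ (deg G v : ℝ) * (x - ((m:ℝ)+2)) / ((m:ℝ)+2) := le_trans h7 h6
            _ = (deg G v : ℝ) * c2 := by rw [hc2def]; ring
  -- summation
  have hsum : ∑ v : V, (nv v : ℝ) ≤ (∑ v : V, (deg G v : ℝ)) * c2 -
      (∑ v ∈ (Finset.univ : Finset V).filter
        (fun v => (deg G v : ℝ) < gchoose c1 (m+1)), (deg G v : ℝ)) * c3 := by
    have h1 := Finset.sum_le_sum (fun v (_ : v ∈ (Finset.univ : Finset V)) => hmain v)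
    rw [Finset.sum_sub_distrib] at h1
    rw [Finset.sum_mul, Finset.sum_mul, Finset.sum_filter]
    exact h1
  set D : ℝ := ∑ v ∈ (Finset.univ : Finset V).filter
      (fun v => (deg G v : ℝ) < gchoose c1 (m+1)), (deg G v : ℝ) with hDdef
  -- identities
  have hid1 : ((m:ℝ)+3) * gchoose x (m+2+1) = gchoose x (m+2) * (x - ((m:ℝ)+2)) := by
    rw [gchoose.succ x (m+2)]
    push_cast
    field_simp
    ring
  have hid3 : ((m:ℝ)+2) * gchoose x (m+1+1) = x * gchoose (x-1) (m+1) := by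
    rw [gchoose.succ' x (m+1)]
    push_cast
    field_simp
    ring
  -- putting everything together
  have hKlow : (1 - δ) * gchoose x (m+2+1) < (K.card : ℝ) := by
    rw [← hKcount]; exact_mod_cast hK
  have hchain : ((m:ℝ)+3) * ((1 - δ) * gchoose x (m+2+1)) <
      gchoose x (m+2) * (x - ((m:ℝ)+2)) - D * c3 := by
    calc ((m:ℝ)+3) * ((1 - δ) * gchoose x (m+2+1)) < ((m:ℝ)+3) * (K.card : ℝ) := by
          apply mul_lt_mul_of_pos_left hKlow (by positivity)
      _ = ∑ v : V, (nv v : ℝ) := hnvsum.symm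
      _ ≤ (∑ v : V, (deg G v : ℝ)) * c2 - D * c3 := hsum
      _ = gchoose x (m+2) * (x - ((m:ℝ)+2)) - D * c3 := by
          rw [hdegsum, hcard, hc2def]
          field_simp
  have hDc3 : D * c3 < δ * (gchoose x (m+2) * (x - ((m:ℝ)+2))) := by nlinarith [hid1, hchain]
  -- final comparison
  have hgx : 0 ≤ gchoose (x-1) (m+1) := gchoose.nonneg (by push_cast; linarith)
  have hfin : δ * (gchoose x (m+2) * (x - ((m:ℝ)+2))) ≤ (Real.sqrt δ * x * gchoose (x-1) (m+1)) * c3 := by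
    have hδsq : Real.sqrt δ * Real.sqrt δ = δ := Real.mul_self_sqrt hδ0.le
    have hg2 : gchoose x (m+1+1) = x * gchoose (x-1) (m+1) / ((m:ℝ)+2) := by
      rw [gchoose.succ' x (m+1)]; push_cast; ring
    have hx0' : (0:ℝ) < x := by linarith
    have h1 : δ * (gchoose x (m+2) * (x - ((m:ℝ)+2))) =
        δ * x * gchoose (x-1) (m+1) * (x - ((m:ℝ)+2)) / ((m:ℝ)+2) := by
      show δ * (gchoose x (m+1+1) * (x - ((m:ℝ)+2))) = _
      rw [hg2]; ring
    have h2 : (Real.sqrt δ * x * gchoose (x-1) (m+1)) * c3 =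
        δ * x * gchoose (x-1) (m+1) * (x - 1) / ((m:ℝ)+2) := by
      calc (Real.sqrt δ * x * gchoose (x-1) (m+1)) * c3
          = (Real.sqrt δ * Real.sqrt δ) * (x * gchoose (x-1) (m+1) * (x-1) / ((m:ℝ)+2)) := by
            rw [hc3def]; ring
        _ = δ * (x * gchoose (x-1) (m+1) * (x-1) / ((m:ℝ)+2)) := by rw [hδsq]
        _ = δ * x * gchoose (x-1) (m+1) * (x - 1) / ((m:ℝ)+2) := by ring
    have h3 : δ * x * gchoose (x-1) (m+1) * (x - ((m:ℝ)+2)) ≤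
        δ * x * gchoose (x-1) (m+1) * (x - 1) :=
      mul_le_mul_of_nonneg_left (by linarith) (by positivity)
    rw [h1, h2]
    exact div_le_div_of_nonneg_right h3 hrpos.le
  have hDlt : D < Real.sqrt δ * x * gchoose (x-1) (m+1) := by
    have := lt_of_lt_of_le hDc3 hfin
    exact lt_of_mul_lt_mul_right this hc3pos.le
  -- conclude
  have hr1 : (m+2) - 1 = m + 1 := rfl
  exact le_of_lt hDlt

end Main
end

section
/- Let C > 0 and let u, v, w be real numbers with u > 1, v ≥ 1, such that C(u,2) = C(v,2) + w and 1 ≤ w < u − 1 − C. Then u < v + 1 − C/u. -/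
/-- If `C > 0`, `C(u,2) = C(v,2) + w` and `1 ≤ w < u - 1 - C`, then `u < v + 1 - C/u`. -/
theorem stmt15 (C u v w : ℝ) (hC : 0 < C) (hu : 1 < u) (hv : 1 ≤ v)
    (h : gchoose u 2 = gchoose v 2 + w) (hw1 : 1 ≤ w) (hw2 : w < u - 1 - C) :
    u < v + 1 - C / u := by
  simp only [gchoose, Finset.prod_range_succ, Finset.prod_range_zero, one_mul,
    Nat.factorial] at h
  push_cast at h
  have h2 : u * (u - 1) = v * (v - 1) + 2 * w := by linarith
  have hu0 : (0:ℝ) < u := by linarith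
  set d := C / u with hdef
  have hd1 : d * u = C := div_mul_cancel₀ C (ne_of_gt hu0)
  have hdpos : 0 < d := div_pos hC hu0
  have hd3 : d < 1 := by rw [hdef, div_lt_one hu0]; linarith
  have hu2 : 2 + C < u := by linarith
  by_contra hc
  push_neg at hc
  have key : v * (v - 1) ≤ (u - 1 + d) * (u - 2 + d) :=
    mul_le_mul (by linarith) (by linarith) (by linarith) (by linarith)
  nlinarith [mul_pos hdpos hu0, mul_pos hdpos hdpos]
end
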